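/- arXiv:1312.0451 — 11 statements merged into one kernel-verified Lean document; each statement's English description precedes it below -/
import Mathlib

section
/- Upper bound for the optimal rule (Theorem 1(i)): in the committee model, the probability of error of the Nitzan–Paroush optimal weighted majority rule satisfies P(Σ_{i=1}^n w_i η_i ≤ 0) ≤ exp(−Φ/2). -/
open MeasureTheory ProbabilityTheory

open Real

open Real

noncomputable def npG (x : ℝ) : ℝ := (x + 1/2) * Real.log x + (3/2 - x) * Real.log (1 - x)

lemma npG_hasDerivAt {x : ℝ} (hx0 : 0 < x) (hx1 : x < 1) :
    HasDerivAt npG (Real.log x - Real.log (1 - x) + (1/2 - x) / (x * (1 - x))) x := by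
  have h1x : (0:ℝ) < 1 - x := by linarith
  have h1 : HasDerivAt (fun y : ℝ => (y + 1/2) * Real.log y)
      (1 * Real.log x + (x + 1/2) * x⁻¹) x :=
    ((hasDerivAt_id x).add_const (1/2)).mul (Real.hasDerivAt_log hx0.ne')
  have h2 : HasDerivAt (fun y : ℝ => Real.log (1 - y)) ((-1) / (1 - x)) x :=
    HasDerivAt.log ((hasDerivAt_id x).const_sub 1) h1x.ne'
  have h3 : HasDerivAt (fun y : ℝ => (3/2 - y) * Real.log (1 - y))
      ((-1) * Real.log (1 - x) + (3/2 - x) * ((-1) / (1 - x))) x :=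
    ((hasDerivAt_id x).const_sub (3/2)).mul h2
  have h : HasDerivAt npG _ x := h1.add h3
  convert h using 1
  field_simp
  ring

lemma npG_deriv_nonpos {x : ℝ} (hx : 1/2 < x) (hx1 : x < 1) :
    Real.log x - Real.log (1 - x) + (1/2 - x) / (x * (1 - x)) ≤ 0 := by
  have hx0 : (0:ℝ) < x := by linarith
  have h1x : (0:ℝ) < 1 - x := by linarith
  set u := Real.log x - Real.log (1 - x) with hu
  have hupos : 0 < u := by
    have : Real.log (1 - x) < Real.log x := Real.log_lt_log h1x (by linarith)
    linarith
  have hsinh : u < Real.sinh u := Real.self_lt_sinh_iff.mpr hupos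
  have heu : Real.exp u = x / (1 - x) := by
    rw [hu, Real.exp_sub, Real.exp_log hx0, Real.exp_log h1x]
  have henu : Real.exp (-u) = (1 - x) / x := by
    rw [Real.exp_neg, heu]
    field_simp
  have hsv : Real.sinh u = (x - 1/2) / (x * (1 - x)) := by
    rw [Real.sinh_eq, heu, henu]
    field_simp
    ring
  rw [hsv] at hsinh
  have : (1/2 - x) / (x * (1 - x)) = -((x - 1/2) / (x * (1 - x))) := by ring
  linarith [this ▸ le_refl ((1/2 - x) / (x * (1 - x)))]

lemma npG_antitone {p : ℝ} (h1 : 1/2 ≤ p) (h2 : p < 1) : npG p ≤ npG (1/2) := by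
  have key : AntitoneOn npG (Set.Icc (1/2 : ℝ) p) := by
    apply antitoneOn_of_deriv_nonpos (convex_Icc _ _)
    · intro x hx
      have hx0 : (0:ℝ) < x := by have := hx.1; linarith
      have hx1 : x < 1 := lt_of_le_of_lt hx.2 h2
      exact (npG_hasDerivAt hx0 hx1).continuousAt.continuousWithinAt
    · intro x hx
      rw [interior_Icc] at hx
      have hx0 : (0:ℝ) < x := by have := hx.1; linarith
      have hx1 : x < 1 := lt_trans hx.2 h2
      exact (npG_hasDerivAt hx0 hx1).differentiableAt.differentiableWithinAt
    · intro x hx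
      rw [interior_Icc] at hx
      have hx1 : x < 1 := lt_trans hx.2 h2
      rw [(npG_hasDerivAt (by linarith [hx.1]) hx1).deriv]
      exact npG_deriv_nonpos hx.1 hx1
  exact key (Set.left_mem_Icc.mpr h1) ⟨h1, le_refl _⟩ h1

lemma npG_symm (p : ℝ) : npG (1 - p) = npG p := by
  unfold npG
  rw [sub_sub_cancel]
  ring

lemma npG_half : npG (1/2 : ℝ) = -Real.log 4 := by
  unfold npG
  have h4 : Real.log 4 = 2 * Real.log 2 := by
    rw [show (4:ℝ) = 2^2 by norm_num, Real.log_pow]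
    push_cast; ring
  have hh : Real.log (1/2 : ℝ) = -Real.log 2 := by
    rw [one_div, Real.log_inv]
  norm_num [hh, h4]
  ring

lemma keyG {p : ℝ} (hp0 : 0 < p) (hp1 : p < 1) : Real.log 4 + npG p ≤ 0 := by
  rcases le_or_gt (1/2) p with h | h
  · have := npG_antitone h hp1
    rw [npG_half] at this
    linarith
  · have h1 : (1/2 : ℝ) ≤ 1 - p := by linarith
    have h2 : 1 - p < 1 := by linarith
    have := npG_antitone h1 h2
    rw [npG_half, npG_symm] at this
    linarith

lemma factor_bound {p : ℝ} (hp0 : 0 < p) (hp1 : p < 1) :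
    p * Real.exp (-(Real.log (p / (1 - p)) / 2)) + (1 - p) * Real.exp (Real.log (p / (1 - p)) / 2)
      ≤ Real.exp (-((p - 1/2) * Real.log (p / (1 - p))) / 2) := by
  have hq : (0:ℝ) < 1 - p := by linarith
  set w := Real.log (p / (1 - p)) with hwdef
  set E := Real.exp (w / 2) with hE
  have hEpos : 0 < E := Real.exp_pos _
  have hE2 : E ^ 2 = p / (1 - p) := by
    rw [hE, sq, ← Real.exp_add, add_halves, hwdef, Real.exp_log (div_pos hp0 hq)]
  have hpE : p = (1 - p) * E ^ 2 := by
    rw [hE2]; field_simp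
  have hinv : Real.exp (-(w / 2)) = E⁻¹ := by rw [Real.exp_neg]
  have hLHS : p * Real.exp (-(w / 2)) + (1 - p) * Real.exp (w / 2) = 2 * (1 - p) * E := by
    have h1 : p * E⁻¹ = (1 - p) * E := by
      have h2 : (1 - p) * E * E = p := by
        rw [mul_assoc, ← sq]; exact hpE.symm
      field_simp
      nlinarith [h2]
    rw [hinv, ← hE, h1]
    ring
  rw [hLHS]
  have h2q : (0:ℝ) < 2 * (1 - p) := by linarith
  have hexp : 2 * (1 - p) * E = Real.exp (Real.log (2 * (1 - p)) + w / 2) := by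
    rw [Real.exp_add, Real.exp_log h2q, hE]
  rw [hexp]
  apply Real.exp_le_exp.mpr
  have hkey := keyG hp0 hp1
  have h4 : Real.log 4 = 2 * Real.log 2 := by
    rw [show (4:ℝ) = 2^2 by norm_num, Real.log_pow]
    push_cast; ring
  have hlog2q : Real.log (2 * (1 - p)) = Real.log 2 + Real.log (1 - p) :=
    Real.log_mul two_ne_zero hq.ne'
  have hlogw : w = Real.log p - Real.log (1 - p) := by
    rw [hwdef, Real.log_div hp0.ne' hq.ne']
  have hnpG : npG p = (p + 1/2) * Real.log p + (3/2 - p) * Real.log (1 - p) := rfl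
  have heq : Real.log (2 * (1 - p)) + w / 2 + ((p - 1/2) * w) / 2
      = (Real.log 4 + npG p) / 2 := by
    rw [hlog2q, hlogw, hnpG, h4]; ring
  linarith

/-- Theorem 1(i): upper bound on the error probability of the Nitzan–Paroush
optimal weighted majority rule. -/
theorem optimal_rule_error_upper_bound
    {Ω : Type*} [MeasurableSpace Ω] (μ : Measure Ω) [IsProbabilityMeasure μ]
    (n : ℕ) (hn : 1 ≤ n)
    (p : Fin n → ℝ) (hp : ∀ i, p i ∈ Set.Ioo (0 : ℝ) 1)
    (η : Fin n → Ω → ℝ)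
    (hηmeas : ∀ i, Measurable (η i))
    (hηval : ∀ i ω, η i ω = 1 ∨ η i ω = -1)
    (hηprob : ∀ i, μ {ω | η i ω = 1} = ENNReal.ofReal (p i))
    (hηind : iIndepFun η μ)
    (w : Fin n → ℝ) (hw : ∀ i, w i = Real.log (p i / (1 - p i)))
    (Φ : ℝ) (hΦ : Φ = ∑ i, (p i - 1/2) * w i) :
    μ {ω | ∑ i, w i * η i ω ≤ 0} ≤ ENNReal.ofReal (Real.exp (-Φ / 2)) := by
  classical
  set X : Fin n → Ω → ℝ := fun i ω => w i * η i ω with hXdef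
  have hp0 : ∀ i, 0 < p i := fun i => (hp i).1
  have hq0 : ∀ i, 0 < 1 - p i := fun i => by have := (hp i).2; linarith
  have hXmeas : ∀ i, Measurable (X i) := fun i => (hηmeas i).const_mul (w i)
  have hXind : iIndepFun X μ := by
    have h := hηind.comp (fun i (x : ℝ) => w i * x) (fun i => measurable_const_mul (w i))
    exact h
  have hint : ∀ (t : ℝ) (i : Fin n), Integrable (fun ω => Real.exp (t * X i ω)) μ := by
    intro t i
    refine Integrable.mono' (integrable_const (Real.exp |t * w i|))
      (((hXmeas i).const_mul t).exp).aestronglyMeasurable (ae_of_all _ fun ω => ?_)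
    rw [Real.norm_eq_abs, abs_of_pos (Real.exp_pos _)]
    apply Real.exp_le_exp.mpr
    rcases hηval i ω with h | h
    · have hx : t * X i ω = t * w i := by
        show t * (w i * η i ω) = t * w i
        rw [h]; ring
      rw [hx]; exact le_abs_self _
    · have hx : t * X i ω = -(t * w i) := by
        show t * (w i * η i ω) = -(t * w i)
        rw [h]; ring
      rw [hx]; exact neg_le_abs _
  -- the error set
  have hS : {ω | ∑ i, w i * η i ω ≤ 0} = {ω | (∑ i, X i) ω ≤ 0} := by
    ext ω; simp [hXdef, Finset.sum_apply]
  -- Chernoff bound with t = -1/2, ε = 0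
  have hchern := measure_le_le_exp_mul_mgf (μ := μ) (X := ∑ i, X i) (t := -(1/2)) 0
    (by norm_num) (iIndepFun.integrable_exp_mul_sum hXind hXmeas (fun i _ => hint _ i))
  rw [show -(-(1/2) : ℝ) * 0 = 0 by ring, Real.exp_zero, one_mul] at hchern
  -- mgf of the sum
  have hmgfsum : mgf (∑ i, X i) μ (-(1/2)) = ∏ i, mgf (X i) μ (-(1/2)) :=
    hXind.mgf_sum hXmeas Finset.univ
  -- mgf of each X i
  have hmgfi : ∀ i, mgf (X i) μ (-(1/2))
      = p i * Real.exp (-(w i / 2)) + (1 - p i) * Real.exp (w i / 2) := by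
    intro i
    have hAmeas : MeasurableSet {ω | η i ω = 1} := by
      have : {ω | η i ω = 1} = η i ⁻¹' {1} := rfl
      rw [this]; exact hηmeas i (measurableSet_singleton 1)
    have hfun : (fun ω => Real.exp (-(1/2) * X i ω))
        = fun ω => {ω | η i ω = 1}.indicator
            (fun _ => Real.exp (-(w i / 2)) - Real.exp (w i / 2)) ω + Real.exp (w i / 2) := by
      funext ω
      rcases hηval i ω with h | h
      · rw [Set.indicator_of_mem (by exact h)]
        have hx : -(1/2 : ℝ) * X i ω = -(w i / 2) := by
          show -(1/2 : ℝ) * (w i * η i ω) = -(w i / 2)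
          rw [h]; ring
        rw [hx]; ring
      · rw [Set.indicator_of_notMem (by simp only [Set.mem_setOf_eq, h]; norm_num)]
        have hx : -(1/2 : ℝ) * X i ω = w i / 2 := by
          show -(1/2 : ℝ) * (w i * η i ω) = w i / 2
          rw [h]; ring
        rw [hx]; ring
    rw [mgf]
    rw [hfun]
    rw [integral_add ((integrable_const _).indicator hAmeas) (integrable_const _),
      integral_indicator_const _ hAmeas, integral_const, measureReal_def, hηprob i,
      ENNReal.toReal_ofReal (hp0 i).le, measureReal_def, measure_univ, ENNReal.toReal_one,
      smul_eq_mul, smul_eq_mul, one_mul]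
    ring
  -- per-factor bound
  have hfac : ∀ i, mgf (X i) μ (-(1/2)) ≤ Real.exp (-((p i - 1/2) * w i) / 2) := by
    intro i
    rw [hmgfi i, hw i]
    exact factor_bound (hp0 i) (hp i).2
  -- product bound
  have hprod : ∏ i, mgf (X i) μ (-(1/2)) ≤ Real.exp (-Φ / 2) := by
    calc ∏ i, mgf (X i) μ (-(1/2))
        ≤ ∏ i, Real.exp (-((p i - 1/2) * w i) / 2) :=
          Finset.prod_le_prod (fun i _ => mgf_nonneg) (fun i _ => hfac i)
      _ = Real.exp (∑ i, -((p i - 1/2) * w i) / 2) := (Real.exp_sum _ _).symm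
      _ = Real.exp (-Φ / 2) := by
          congr 1
          rw [hΦ, ← Finset.sum_div, Finset.sum_neg_distrib]
  rw [hS]
  calc μ {ω | (∑ i, X i) ω ≤ 0}
      = ENNReal.ofReal (μ {ω | (∑ i, X i) ω ≤ 0}).toReal :=
        (ENNReal.ofReal_toReal (measure_ne_top μ _)).symm
    _ ≤ ENNReal.ofReal (Real.exp (-Φ / 2)) := by
        apply ENNReal.ofReal_le_ofReal
        calc (μ {ω | (∑ i, X i) ω ≤ 0}).toReal
            ≤ mgf (∑ i, X i) μ (-(1/2)) := hchern
          _ = ∏ i, mgf (X i) μ (-(1/2)) := hmgfsum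
          _ ≤ Real.exp (-Φ / 2) := hprod
end

section
/- Lower bound for the optimal rule (Theorem 1(ii)): in the committee model, the probability of error of the Nitzan–Paroush optimal weighted majority rule satisfies P(Σ_{i=1}^n w_i η_i ≤ 0) ≥ 3 / (4 · (1 + exp(2Φ + 4√Φ))). -/
open MeasureTheory ProbabilityTheory Finset

namespace CommitteeAux

variable {n : ℕ}

noncomputable def sgn (b : Bool) : ℝ := if b then 1 else -1

noncomputable def PP (p : Fin n → ℝ) (f : Fin n → Bool) : ℝ :=
  ∏ i, (if f i then p i else 1 - p i)

noncomputable def QQ (p : Fin n → ℝ) (f : Fin n → Bool) : ℝ :=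
  ∏ i, (if f i then 1 - p i else p i)

noncomputable def XX (w : Fin n → ℝ) (f : Fin n → Bool) : ℝ :=
  ∑ i, w i * sgn (f i)

lemma cube_sum (h : Fin n → Bool → ℝ) :
    ∑ f : Fin n → Bool, ∏ i, h i (f i) = ∏ i, (h i true + h i false) := by
  rw [← Fintype.prod_sum]
  simp [Fintype.sum_bool]

lemma PP_nonneg {p : Fin n → ℝ} (hp : ∀ i, p i ∈ Set.Ioo (0:ℝ) 1) (f : Fin n → Bool) :
    0 ≤ PP p f :=
  Finset.prod_nonneg fun i _ => by
    rcases (hp i) with ⟨h0, h1⟩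
    split <;> linarith

lemma QQ_nonneg {p : Fin n → ℝ} (hp : ∀ i, p i ∈ Set.Ioo (0:ℝ) 1) (f : Fin n → Bool) :
    0 ≤ QQ p f :=
  Finset.prod_nonneg fun i _ => by
    rcases (hp i) with ⟨h0, h1⟩
    split <;> linarith

lemma sum_PP (p : Fin n → ℝ) : ∑ f : Fin n → Bool, PP p f = 1 := by
  rw [show (fun f : Fin n → Bool => PP p f) = fun f => ∏ i, (if f i then p i else 1 - p i) from rfl]
  rw [cube_sum (fun i b => if b then p i else 1 - p i)]
  simp

lemma cube_expect_single (p : Fin n → ℝ) (i : Fin n) (c : Bool → ℝ) :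
    ∑ f : Fin n → Bool, QQ p f * c (f i) = (1 - p i) * c true + p i * c false := by
  have h1 : ∀ f : Fin n → Bool, QQ p f * c (f i) =
      ∏ j, ((if f j then 1 - p j else p j) * (if j = i then c (f j) else 1)) := by
    intro f
    rw [Finset.prod_mul_distrib, Finset.prod_ite_eq' Finset.univ i (fun j => c (f j))]
    simp [QQ]
  rw [Finset.sum_congr rfl fun f _ => h1 f,
    cube_sum (fun j b => (if b then 1 - p j else p j) * (if j = i then c b else 1))]
  rw [Finset.prod_eq_single i (fun j _ hj => by simp [hj]) (by simp)]
  simp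

lemma cube_expect_pair (p : Fin n → ℝ) {i j : Fin n} (hij : i ≠ j) (c d : Bool → ℝ) :
    ∑ f : Fin n → Bool, QQ p f * (c (f i) * d (f j)) =
      ((1 - p i) * c true + p i * c false) * ((1 - p j) * d true + p j * d false) := by
  have h1 : ∀ f : Fin n → Bool, QQ p f * (c (f i) * d (f j)) =
      ∏ k, ((if f k then 1 - p k else p k) * (if k = i then c (f k) else 1)
        * (if k = j then d (f k) else 1)) := by
    intro f
    rw [Finset.prod_mul_distrib, Finset.prod_mul_distrib,
      Finset.prod_ite_eq' Finset.univ i (fun k => c (f k)),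
      Finset.prod_ite_eq' Finset.univ j (fun k => d (f k))]
    simp [QQ]; ring
  rw [Finset.sum_congr rfl fun f _ => h1 f,
    cube_sum (fun k b => (if b then 1 - p k else p k) * (if k = i then c b else 1)
      * (if k = j then d b else 1))]
  have h2 : ∀ k : Fin n,
      ((if (true:Bool) then 1 - p k else p k) * (if k = i then c true else 1)
        * (if k = j then d true else 1)
      + (if (false:Bool) then 1 - p k else p k) * (if k = i then c false else 1)
        * (if k = j then d false else 1))
      = (if k = i then (1 - p k) * c true + p k * c false else 1)
        * (if k = j then (1 - p k) * d true + p k * d false else 1) := by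
    intro k
    by_cases hki : k = i
    · subst hki
      simp [hij, Ne.symm, (fun h => hij (h ▸ rfl) : k = j → False)]
      try ring
    · by_cases hkj : k = j
      · subst hkj; simp [hki]; try ring
      · simp [hki, hkj]
  rw [Finset.prod_congr rfl fun k _ => h2 k, Finset.prod_mul_distrib,
    Finset.prod_ite_eq' Finset.univ i (fun k => (1 - p k) * c true + p k * c false),
    Finset.prod_ite_eq' Finset.univ j (fun k => (1 - p k) * d true + p k * d false)]
  simp

lemma varQ (p w : Fin n → ℝ) (Φ : ℝ) (hΦ : Φ = ∑ i, (p i - 1/2) * w i) :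
    ∑ f : Fin n → Bool, QQ p f * (XX w f + 2*Φ)^2
      = ∑ i, 4 * p i * (1 - p i) * w i ^ 2 := by
  set c : Fin n → Bool → ℝ := fun i b => w i * sgn b + (2 * p i - 1) * w i with hcdef
  have hc : ∀ f : Fin n → Bool, XX w f + 2*Φ = ∑ i, c i (f i) := by
    intro f
    rw [XX, hΦ, Finset.mul_sum, ← Finset.sum_add_distrib]
    apply Finset.sum_congr rfl; intro i _; simp only [hcdef]; ring
  have h1 : ∀ f : Fin n → Bool, QQ p f * (XX w f + 2*Φ)^2
      = ∑ i, ∑ j, QQ p f * (c i (f i) * c j (f j)) := by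
    intro f
    rw [hc f, sq, Finset.sum_mul_sum]
    rw [Finset.mul_sum]
    apply Finset.sum_congr rfl; intro i _
    rw [Finset.mul_sum]
  rw [Finset.sum_congr rfl fun f _ => h1 f, Finset.sum_comm]
  have h2 : ∀ i : Fin n, ∑ f : Fin n → Bool, ∑ j, QQ p f * (c i (f i) * c j (f j))
      = 4 * p i * (1 - p i) * w i ^ 2 := by
    intro i
    rw [Finset.sum_comm]
    rw [Finset.sum_eq_single i (fun j _ hj => by
      rw [cube_expect_pair p (Ne.symm hj) (c i) (c j)]
      have : (1 - p j) * c j true + p j * c j false = 0 := by simp [hcdef, sgn]; ring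
      rw [this, mul_zero]) (by simp)]
    rw [cube_expect_single p i (fun b => c i b * c i b)]
    simp only [hcdef, sgn]
    simp
    ring
  rw [Finset.sum_congr rfl fun i _ => h2 i]

lemma QP (p w : Fin n → ℝ) (hp : ∀ i, p i ∈ Set.Ioo (0:ℝ) 1)
    (hw : ∀ i, w i = Real.log (p i / (1 - p i))) (f : Fin n → Bool) :
    PP p f = QQ p f * Real.exp (XX w f) := by
  rw [XX, Real.exp_sum, QQ, PP, ← Finset.prod_mul_distrib]
  apply Finset.prod_congr rfl
  intro i _
  rcases hp i with ⟨h0, h1⟩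
  have hq : (0:ℝ) < 1 - p i := by linarith
  have hew : Real.exp (w i) = p i / (1 - p i) := by
    rw [hw i, Real.exp_log (by positivity)]
  cases hfi : f i
  · simp only [sgn, Bool.false_eq_true, if_false]
    rw [mul_neg_one, Real.exp_neg, hew]
    field_simp
  · simp only [sgn, if_true]
    rw [mul_one, hew]
    field_simp

lemma XX_flip (w : Fin n → ℝ) (f : Fin n → Bool) :
    XX w (fun i => !f i) = -(XX w f) := by
  rw [XX, XX, ← neg_one_mul, Finset.mul_sum]
  apply Finset.sum_congr rfl
  intro i _
  cases hfi : f i <;> simp [sgn]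

lemma QQ_flip (p : Fin n → ℝ) (f : Fin n → Bool) :
    QQ p f = PP p (fun i => !f i) := by
  rw [QQ, PP]
  apply Finset.prod_congr rfl
  intro i _
  cases hfi : f i <;> simp

lemma varterm_half {p : ℝ} (h0 : 0 < p) (h1 : p < 1) (hhalf : 1/2 ≤ p) :
    p * (1-p) * (Real.log (p/(1-p)))^2 ≤ (p - 1/2) * Real.log (p/(1-p)) := by
  have hq : (0:ℝ) < 1 - p := by linarith
  set w := Real.log (p/(1-p)) with hwdef
  have hx : 1 ≤ p / (1-p) := by rw [le_div_iff₀ hq]; linarith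
  have hw0 : 0 ≤ w := Real.log_nonneg hx
  have hsinh : w ≤ Real.sinh w := Real.self_le_sinh_iff.mpr hw0
  have hsl : Real.sinh w = (p/(1-p) - (p/(1-p))⁻¹)/2 := Real.sinh_log (by positivity)
  have hval : Real.sinh w = (2*p - 1) / (2 * (p*(1-p))) := by
    rw [hsl]; field_simp; ring
  have h2 : p * (1-p) * w ≤ p - 1/2 := by
    have hww : w ≤ (2*p - 1) / (2 * (p*(1-p))) := hval ▸ hsinh
    rw [le_div_iff₀ (by positivity)] at hww
    nlinarith
  nlinarith [mul_le_mul_of_nonneg_right h2 hw0]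

lemma varterm {p wv : ℝ} (h0 : 0 < p) (h1 : p < 1)
    (hw : wv = Real.log (p / (1 - p))) :
    p * (1-p) * wv^2 ≤ (p - 1/2) * wv := by
  rcases le_or_gt (1/2) p with h | h
  · rw [hw]; exact varterm_half h0 h1 h
  · have h0' : 0 < 1 - p := by linarith
    have h1' : 1 - p < 1 := by linarith
    have := varterm_half h0' h1' (by linarith)
    have hlog : Real.log ((1-p)/p) = -wv := by
      rw [hw, ← Real.log_inv, inv_div]
    rw [show (1:ℝ) - (1-p) = p by ring] at this
    rw [hlog] at this
    nlinarith [this]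

lemma key (p w : Fin n → ℝ) (hp : ∀ i, p i ∈ Set.Ioo (0:ℝ) 1)
    (hw : ∀ i, w i = Real.log (p i / (1 - p i)))
    (Φ : ℝ) (hΦ : Φ = ∑ i, (p i - 1/2) * w i) (hΦpos : 0 < Φ) :
    3 / (4 * (1 + Real.exp (2*Φ + 4*Real.sqrt Φ)))
      ≤ ∑ f ∈ Finset.univ.filter (fun f : Fin n → Bool => XX w f ≤ 0), PP p f := by
  classical
  set x : ℝ := 2*Φ + 4*Real.sqrt Φ with hxdef
  have hsq : 0 < Real.sqrt Φ := Real.sqrt_pos.mpr hΦpos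
  have hxpos : 0 < x := by positivity
  set A : Finset (Fin n → Bool) := Finset.univ.filter (fun f => XX w f ≤ 0) with hA
  set a : ℝ := ∑ f ∈ A, PP p f with ha
  have ha0 : 0 ≤ a := Finset.sum_nonneg fun f _ => PP_nonneg hp f
  -- Step 1: sum of QQ over A equals sum of PP over A' = {0 ≤ XX}
  have hQA : ∑ f ∈ A, QQ p f
      = ∑ f ∈ Finset.univ.filter (fun f : Fin n → Bool => 0 ≤ XX w f), PP p f := by
    refine Finset.sum_bij' (fun f _ => fun i => !f i) (fun f _ => fun i => !f i)
      ?_ ?_ ?_ ?_ ?_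
    · intro f hf
      rw [hA] at hf
      simp only [Finset.mem_filter, Finset.mem_univ, true_and] at hf
      refine Finset.mem_filter.mpr ⟨Finset.mem_univ _, ?_⟩
      rw [XX_flip]; linarith
    · intro f hf
      simp only [Finset.mem_filter, Finset.mem_univ, true_and] at hf
      rw [hA]
      refine Finset.mem_filter.mpr ⟨Finset.mem_univ _, ?_⟩
      rw [XX_flip]; linarith
    · intro f _; funext i; simp
    · intro f _; funext i; simp
    · intro f _; exact QQ_flip p f
  -- Step 2: 1 - a ≤ ∑ f in A, QQ p f
  have hlow : 1 - a ≤ ∑ f ∈ A, QQ p f := by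
    rw [hQA]
    have hsplit := Finset.sum_filter_add_sum_filter_not Finset.univ
      (fun f : Fin n → Bool => 0 ≤ XX w f) (PP p)
    rw [sum_PP p] at hsplit
    have hsub : Finset.univ.filter (fun f : Fin n → Bool => ¬ (0 ≤ XX w f)) ⊆ A := by
      intro f hf
      simp only [hA, Finset.mem_filter, Finset.mem_univ, true_and] at hf ⊢
      linarith [hf]
    have := Finset.sum_le_sum_of_subset_of_nonneg hsub
      (fun f _ _ => PP_nonneg hp f)
    linarith
  -- Step 3: Chebyshev
  have hvar : ∑ f : Fin n → Bool, QQ p f * (XX w f + 2*Φ)^2 ≤ 4*Φ := by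
    rw [varQ p w Φ hΦ]
    have : ∀ i : Fin n, 4 * p i * (1 - p i) * w i ^ 2 ≤ 4 * ((p i - 1/2) * w i) := by
      intro i
      have := varterm (hp i).1 (hp i).2 (hw i)
      linarith
    calc ∑ i, 4 * p i * (1 - p i) * w i ^ 2 ≤ ∑ i, 4 * ((p i - 1/2) * w i) :=
          Finset.sum_le_sum fun i _ => this i
      _ = 4 * Φ := by rw [hΦ, Finset.mul_sum]
  have hcheb : ∑ f ∈ Finset.univ.filter (fun f : Fin n → Bool => XX w f < -x), QQ p f
      ≤ 1/4 := by
    have hterm : ∀ f ∈ Finset.univ.filter (fun f : Fin n → Bool => XX w f < -x),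
        QQ p f ≤ QQ p f * (XX w f + 2*Φ)^2 / (16*Φ) := by
      intro f hf
      simp only [Finset.mem_filter, Finset.mem_univ, true_and] at hf
      have h1 : XX w f + 2*Φ < -(4*Real.sqrt Φ) := by
        simp only [hxdef] at hf; linarith
      have h2 : (4*Real.sqrt Φ)^2 = 16*Φ := by
        rw [mul_pow, Real.sq_sqrt hΦpos.le]; norm_num
      have h3 : 16*Φ ≤ (XX w f + 2*Φ)^2 := by
        rw [← h2]
        have : 4*Real.sqrt Φ < -(XX w f + 2*Φ) := by linarith
        nlinarith [hsq]
      have hQ := QQ_nonneg hp f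
      rw [le_div_iff₀ (by positivity)]
      nlinarith
    calc ∑ f ∈ Finset.univ.filter (fun f : Fin n → Bool => XX w f < -x), QQ p f
        ≤ ∑ f ∈ Finset.univ.filter (fun f : Fin n → Bool => XX w f < -x),
            QQ p f * (XX w f + 2*Φ)^2 / (16*Φ) := Finset.sum_le_sum hterm
      _ ≤ ∑ f : Fin n → Bool, QQ p f * (XX w f + 2*Φ)^2 / (16*Φ) := by
          apply Finset.sum_le_sum_of_subset_of_nonneg (Finset.filter_subset _ _)
          intro f _ _
          have := QQ_nonneg hp f
          positivity
      _ = (∑ f : Fin n → Bool, QQ p f * (XX w f + 2*Φ)^2) / (16*Φ) := by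
          rw [Finset.sum_div]
      _ ≤ (4*Φ) / (16*Φ) := by gcongr
      _ = 1/4 := by
          rw [div_eq_iff (by positivity)]; ring
  -- Step 4: combine
  have hsplitA := Finset.sum_filter_add_sum_filter_not A
    (fun f : Fin n → Bool => -x ≤ XX w f) (QQ p)
  have hsub2 : A.filter (fun f : Fin n → Bool => ¬ (-x ≤ XX w f))
      ⊆ Finset.univ.filter (fun f : Fin n → Bool => XX w f < -x) := by
    intro f hf
    simp only [Finset.mem_filter, Finset.mem_univ, true_and] at hf ⊢
    linarith [hf]
  have h4 : ∑ f ∈ A.filter (fun f : Fin n → Bool => ¬ (-x ≤ XX w f)), QQ p f ≤ 1/4 :=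
    le_trans (Finset.sum_le_sum_of_subset_of_nonneg hsub2
      (fun f _ _ => QQ_nonneg hp f)) hcheb
  have h5 : 3/4 - a ≤ ∑ f ∈ A.filter (fun f : Fin n → Bool => -x ≤ XX w f), QQ p f := by
    linarith [hlow, hsplitA, h4]
  have h6 : ∑ f ∈ A.filter (fun f : Fin n → Bool => -x ≤ XX w f), QQ p f
      ≤ Real.exp x * a := by
    calc ∑ f ∈ A.filter (fun f : Fin n → Bool => -x ≤ XX w f), QQ p f
        ≤ ∑ f ∈ A.filter (fun f : Fin n → Bool => -x ≤ XX w f), Real.exp x * PP p f := by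
          apply Finset.sum_le_sum
          intro f hf
          simp only [Finset.mem_filter] at hf
          have hQP := QP p w hp hw f
          have hEQ : QQ p f = PP p f * Real.exp (-(XX w f)) := by
            rw [hQP, Real.exp_neg, mul_assoc, mul_inv_cancel₀ (Real.exp_ne_zero _), mul_one]
          rw [hEQ]
          have hle : Real.exp (-(XX w f)) ≤ Real.exp x :=
            Real.exp_le_exp.mpr (by linarith [hf])
          have hPn := PP_nonneg hp f
          nlinarith
      _ = Real.exp x * ∑ f ∈ A.filter (fun f : Fin n → Bool => -x ≤ XX w f), PP p f := by
          rw [Finset.mul_sum]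
      _ ≤ Real.exp x * a := by
          apply mul_le_mul_of_nonneg_left ?_ (Real.exp_nonneg x)
          exact Finset.sum_le_sum_of_subset_of_nonneg (Finset.filter_subset _ _)
            (fun f _ _ => PP_nonneg hp f)
  have h7 : 3/4 ≤ a * (1 + Real.exp x) := by nlinarith [h5, h6]
  rw [div_le_iff₀ (by positivity)]
  nlinarith [h7]

end CommitteeAux

open CommitteeAux

/-- Theorem 1(ii): lower bound on the error probability of the Nitzan–Paroush
optimal weighted majority rule. -/
theorem optimal_rule_error_lower_bound
    {Ω : Type*} [MeasurableSpace Ω] (μ : Measure Ω) [IsProbabilityMeasure μ]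
    (n : ℕ) (hn : 1 ≤ n)
    (p : Fin n → ℝ) (hp : ∀ i, p i ∈ Set.Ioo (0 : ℝ) 1)
    (η : Fin n → Ω → ℝ)
    (hηmeas : ∀ i, Measurable (η i))
    (hηval : ∀ i ω, η i ω = 1 ∨ η i ω = -1)
    (hηprob : ∀ i, μ {ω | η i ω = 1} = ENNReal.ofReal (p i))
    (hηind : iIndepFun η μ)
    (w : Fin n → ℝ) (hw : ∀ i, w i = Real.log (p i / (1 - p i)))
    (Φ : ℝ) (hΦ : Φ = ∑ i, (p i - 1/2) * w i) :
    ENNReal.ofReal (3 / (4 * (1 + Real.exp (2 * Φ + 4 * Real.sqrt Φ)))) ≤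
      μ {ω | ∑ i, w i * η i ω ≤ 0} := by
  classical
  have hterm : ∀ i, 0 ≤ (p i - 1/2) * w i := by
    intro i
    rcases hp i with ⟨h0, h1⟩
    have hq : (0:ℝ) < 1 - p i := by linarith
    rcases le_or_gt (1/2) (p i) with h | h
    · have hwn : 0 ≤ w i := by
        rw [hw i]
        apply Real.log_nonneg
        rw [le_div_iff₀ hq]; linarith
      nlinarith
    · have hwn : w i ≤ 0 := by
        rw [hw i]
        apply Real.log_nonpos (by positivity)
        rw [div_le_one hq]; linarith
      nlinarith
  have hΦ0 : 0 ≤ Φ := hΦ ▸ Finset.sum_nonneg fun i _ => hterm i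
  rcases eq_or_lt_of_le hΦ0 with hzero | hpos
  · -- Φ = 0 : all weights vanish
    have hws : ∀ i, w i = 0 := by
      have hsum0 : ∑ i, (p i - 1/2) * w i = 0 := by rw [← hΦ, ← hzero]
      have := (Finset.sum_eq_zero_iff_of_nonneg (fun i _ => hterm i)).mp hsum0
      intro i
      have hi := this i (Finset.mem_univ i)
      rcases mul_eq_zero.mp hi with h | h
      · have hpi : p i = 1/2 := by linarith
        rw [hw i, hpi]; norm_num
      · exact h
    have hset : {ω | ∑ i, w i * η i ω ≤ 0} = Set.univ := by
      ext ω; simp [hws]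
    rw [hset, measure_univ]
    rw [ENNReal.ofReal_le_one]
    have hex := Real.exp_pos (2 * Φ + 4 * Real.sqrt Φ)
    rw [div_le_one (by positivity)]
    nlinarith
  · -- Φ > 0 : main case
    have hkey := key p w hp hw Φ hΦ hpos
    have hsgn : ∀ i ω, η i ω = sgn (decide (η i ω = 1)) := by
      intro i ω
      rcases hηval i ω with h | h
      · simp [h, sgn]
      · have h1 : ¬ (η i ω = 1) := by rw [h]; norm_num
        simp [sgn, h1, h]
    set A : Finset (Fin n → Bool) := Finset.univ.filter (fun f => XX w f ≤ 0) with hA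
    have hev : {ω | ∑ i, w i * η i ω ≤ 0}
        = ⋃ f ∈ A, ⋂ i, (η i) ⁻¹' {sgn (f i)} := by
      ext ω
      simp only [Set.mem_setOf_eq, Set.mem_iUnion, Set.mem_iInter, Set.mem_preimage,
        Set.mem_singleton_iff]
      constructor
      · intro hsum
        refine ⟨fun i => decide (η i ω = 1), ?_, fun i => hsgn i ω⟩
        rw [hA]
        refine Finset.mem_filter.mpr ⟨Finset.mem_univ _, ?_⟩
        have hXX : XX w (fun i => decide (η i ω = 1)) = ∑ i, w i * η i ω := by
          rw [XX]
          exact Finset.sum_congr rfl fun i _ => by rw [← hsgn i ω]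
        rw [hXX]; exact hsum
      · rintro ⟨f, hfA, hfω⟩
        have hXX : ∑ i, w i * η i ω = XX w f := by
          rw [XX]
          exact Finset.sum_congr rfl fun i _ => by rw [hfω i]
        rw [hXX]
        rw [hA] at hfA
        exact (Finset.mem_filter.mp hfA).2
    rw [hev]
    have hmeasS : ∀ f : Fin n → Bool, MeasurableSet (⋂ i, (η i) ⁻¹' {sgn (f i)}) :=
      fun f => MeasurableSet.iInter fun i => (hηmeas i) (measurableSet_singleton _)
    have hdisj : Set.PairwiseDisjoint (A : Set (Fin n → Bool))
        (fun f => ⋂ i, (η i) ⁻¹' {sgn (f i)}) := by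
      intro f _ g _ hfg
      apply Set.disjoint_left.mpr
      intro ω hωf hωg
      apply hfg
      funext i
      have h1 : η i ω = sgn (f i) := by
        have := Set.mem_iInter.mp hωf i; simpa using this
      have h2 : η i ω = sgn (g i) := by
        have := Set.mem_iInter.mp hωg i; simpa using this
      have h3 : sgn (f i) = sgn (g i) := by rw [← h1, ← h2]
      cases hfi : f i <;> cases hgi : g i <;>
        first
          | rfl
          | (exfalso; rw [hfi, hgi] at h3; simp [sgn] at h3; norm_num at h3)
    rw [measure_biUnion_finset hdisj (fun f _ => hmeasS f)]
    have htermμ : ∀ f : Fin n → Bool,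
        μ (⋂ i, (η i) ⁻¹' {sgn (f i)}) = ENNReal.ofReal (PP p f) := by
      intro f
      rw [hηind.meas_iInter (fun i => ⟨{sgn (f i)}, measurableSet_singleton _, rfl⟩)]
      rw [PP, ENNReal.ofReal_prod_of_nonneg (fun i _ => by
        rcases hp i with ⟨h0, h1⟩; split <;> linarith)]
      apply Finset.prod_congr rfl
      intro i _
      have hmeas1 : MeasurableSet {ω | η i ω = 1} :=
        (hηmeas i) (measurableSet_singleton 1)
      cases hfi : f i
      · have hcompl : (η i) ⁻¹' {sgn false} = {ω | η i ω = 1}ᶜ := by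
          ext ω
          simp only [Set.mem_preimage, Set.mem_singleton_iff, Set.mem_compl_iff,
            Set.mem_setOf_eq, sgn]
          constructor
          · intro h h'
            rw [h'] at h; norm_num at h
          · intro h
            rcases hηval i ω with h' | h'
            · exact absurd h' h
            · simpa using h'
        rw [hcompl, measure_compl hmeas1 (measure_ne_top μ _), hηprob i, measure_univ]
        rcases hp i with ⟨h0, h1⟩
        rw [if_neg (by simp), ENNReal.ofReal_sub 1 h0.le, ENNReal.ofReal_one]
      · have heq : (η i) ⁻¹' {sgn true} = {ω | η i ω = 1} := by
          ext ω; simp [sgn]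
        rw [heq, hηprob i, if_pos rfl]
    rw [Finset.sum_congr rfl fun f _ => htermμ f,
      ← ENNReal.ofReal_sum_of_nonneg (fun f _ => PP_nonneg hp f)]
    exact ENNReal.ofReal_le_ofReal hkey
end

section
/- Antipodal decomposition of correctness and error probabilities (Lemma 2): in the committee model, assume Σ_{i=1}^n w_i η_i ≠ 0 for every sign vector η ∈ {−1,+1}^n. For η ∈ {−1,+1}^n let P(η) = Π_{i: η_i=1} p_i · Π_{i: η_i=−1} q_i. Then P(Σ_{i=1}^n w_i η_i > 0) = Σ_η max{P(η), P(−η)} and P(Σ_{i=1}^n w_i η_i ≤ 0) = Σ_η min{P(η), P(−η)}, where each sum ranges over a set of representatives containing exactly one element of each antipodal pair {η, −η} ⊂ {−1,+1}^n. -/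
open MeasureTheory ProbabilityTheory

/-- Lemma 2: antipodal decomposition of the correctness and error probabilities of the
Nitzan–Paroush optimal weighted majority rule.  Sign vectors are encoded as elements
`s : Fin n → Bool`, with `s i = true` meaning `η_i = 1` and `s i = false` meaning `η_i = -1`;
the antipode of `s` is `fun i => !s i`.  `V` is a set of representatives containing exactly
one member of each antipodal pair. -/
theorem antipodal_decomposition
    {Ω : Type*} [MeasurableSpace Ω] (μ : Measure Ω) [IsProbabilityMeasure μ]
    (n : ℕ) (hn : 1 ≤ n)
    (p : Fin n → ℝ) (hp : ∀ i, p i ∈ Set.Ioo (0 : ℝ) 1)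
    (η : Fin n → Ω → ℝ)
    (hηmeas : ∀ i, Measurable (η i))
    (hηval : ∀ i ω, η i ω = 1 ∨ η i ω = -1)
    (hηprob : ∀ i, μ {ω | η i ω = 1} = ENNReal.ofReal (p i))
    (hηind : iIndepFun η μ)
    (w : Fin n → ℝ) (hw : ∀ i, w i = Real.log (p i / (1 - p i)))
    (hne : ∀ s : Fin n → Bool, ∑ i, w i * (if s i then (1 : ℝ) else -1) ≠ 0)
    (P : (Fin n → Bool) → ℝ)
    (hP : ∀ s, P s = ∏ i, if s i then p i else 1 - p i)
    (V : Finset (Fin n → Bool))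
    (hV : ∀ s, s ∈ V ↔ (fun i => !s i) ∉ V) :
    μ {ω | 0 < ∑ i, w i * η i ω} =
        ENNReal.ofReal (∑ s ∈ V, max (P s) (P (fun i => !s i))) ∧
    μ {ω | ∑ i, w i * η i ω ≤ 0} =
        ENNReal.ofReal (∑ s ∈ V, min (P s) (P (fun i => !s i))) := by
  classical
  have hq : ∀ i, 0 < 1 - p i := fun i => by linarith [(hp i).2]
  have hPpos : ∀ s, 0 < P s := by
    intro s
    rw [hP]
    exact Finset.prod_pos fun i _ => by
      by_cases h : s i <;> simp [h, (hp i).1, hq i]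
  have hnn : ∀ s : Fin n → Bool, (fun i => !(!s i)) = s :=
    fun s => funext fun i => Bool.not_not _
  -- negation of the sum under antipode
  have hTneg : ∀ s : Fin n → Bool,
      ∑ i, w i * (if !s i then (1 : ℝ) else -1)
        = - ∑ i, w i * (if s i then (1 : ℝ) else -1) := by
    intro s
    rw [eq_neg_iff_add_eq_zero, ← Finset.sum_add_distrib]
    exact Finset.sum_eq_zero fun i _ => by cases h : s i <;> simp [h] <;> ring
  -- the sum as a difference of logs
  have hlogP : ∀ s : Fin n → Bool,
      ∑ i, w i * (if s i then (1 : ℝ) else -1)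
        = Real.log (P s) - Real.log (P (fun i => !s i)) := by
    intro s
    rw [hP, hP]
    rw [Real.log_prod (fun i _ => by
          by_cases h : s i <;> simp [h, (hp i).1.ne', (hq i).ne'])]
    rw [Real.log_prod (fun i _ => by
          by_cases h : s i <;> simp [h, (hp i).1.ne', (hq i).ne'])]
    rw [← Finset.sum_sub_distrib]
    refine Finset.sum_congr rfl fun i _ => ?_
    have hlog : Real.log (p i / (1 - p i)) = Real.log (p i) - Real.log (1 - p i) :=
      Real.log_div (hp i).1.ne' (hq i).ne'
    cases h : s i <;> simp [h, hw i, hlog] <;> ring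
  have hkey : ∀ s : Fin n → Bool,
      (0 < ∑ i, w i * (if s i then (1 : ℝ) else -1)) ↔ P (fun i => !s i) < P s := by
    intro s
    rw [hlogP s, sub_pos, Real.log_lt_log_iff (hPpos _) (hPpos _)]
  -- measure of each atom
  have hμfalse : ∀ i, μ {ω | η i ω = (-1 : ℝ)} = ENNReal.ofReal (1 - p i) := by
    intro i
    have hc : {ω | η i ω = (-1 : ℝ)} = {ω | η i ω = 1}ᶜ := by
      ext ω
      simp only [Set.mem_setOf_eq, Set.mem_compl_iff]
      constructor
      · intro h h1; rw [h1] at h; norm_num at h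
      · intro h; rcases hηval i ω with h1 | h1
        · exact absurd h1 h
        · exact h1
    have hm : MeasurableSet {ω | η i ω = (1 : ℝ)} :=
      (hηmeas i) (measurableSet_singleton (1 : ℝ))
    rw [hc, measure_compl hm (measure_ne_top μ _), measure_univ, hηprob i,
      ENNReal.ofReal_sub _ (hp i).1.le, ENNReal.ofReal_one]
  have hA : ∀ s : Fin n → Bool,
      μ (⋂ i, η i ⁻¹' {if s i then (1 : ℝ) else -1}) = ENNReal.ofReal (P s) := by
    intro s
    rw [hηind.meas_iInter (fun i =>
      ⟨{if s i then (1 : ℝ) else -1}, measurableSet_singleton _, rfl⟩), hP,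
      ENNReal.ofReal_prod_of_nonneg (fun i _ => by
        by_cases h : s i <;> simp [h, (hp i).1.le, (hq i).le])]
    refine Finset.prod_congr rfl fun i _ => ?_
    by_cases h : s i
    · simp only [h, if_true]; exact hηprob i
    · simp only [h, if_false]; exact hμfalse i
  have hAmeas : ∀ s : Fin n → Bool,
      MeasurableSet (⋂ i, η i ⁻¹' {if s i then (1 : ℝ) else -1}) :=
    fun s => MeasurableSet.iInter fun i => (hηmeas i) (measurableSet_singleton _)
  -- measure of unions of atoms
  have hU : ∀ F : Finset (Fin n → Bool),
      μ (⋃ s ∈ F, ⋂ i, η i ⁻¹' {if s i then (1 : ℝ) else -1})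
        = ENNReal.ofReal (∑ s ∈ F, P s) := by
    intro F
    have hdisj : (↑F : Set (Fin n → Bool)).PairwiseDisjoint
        (fun s => ⋂ i, η i ⁻¹' {if s i then (1 : ℝ) else -1}) := by
      intro s _ t _ hst
      rw [Function.onFun, Set.disjoint_left]
      intro ω hωs hωt
      obtain ⟨i, hi⟩ := Function.ne_iff.mp hst
      have h1 := Set.mem_iInter.mp hωs i
      have h2 := Set.mem_iInter.mp hωt i
      simp only [Set.mem_preimage, Set.mem_singleton_iff] at h1 h2
      rw [h1] at h2
      cases hsi : s i <;> cases hti : t i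
      · exact hi (hsi.trans hti.symm)
      · rw [hsi, hti] at h2; norm_num at h2
      · rw [hsi, hti] at h2; norm_num at h2
      · exact hi (hsi.trans hti.symm)
    rw [measure_biUnion_finset hdisj (fun s _ => hAmeas s)]
    rw [ENNReal.ofReal_sum_of_nonneg (fun s _ => (hPpos s).le)]
    exact Finset.sum_congr rfl fun s _ => hA s
  -- each ω belongs to the atom of its sign vector
  have hηeq : ∀ ω i, η i ω = if decide (η i ω = 1) then (1 : ℝ) else -1 := by
    intro ω i
    by_cases h : η i ω = 1
    · simp [h]
    · rcases hηval i ω with h1 | h1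
      · exact absurd h1 h
      · rw [h1]; norm_num
  -- the events as unions of atoms
  have hset : ∀ c : ℝ → Prop,
      {ω | c (∑ i, w i * η i ω)}
        = ⋃ s ∈ Finset.univ.filter
            (fun s : Fin n → Bool => c (∑ i, w i * (if s i then (1 : ℝ) else -1))),
          ⋂ i, η i ⁻¹' {if s i then (1 : ℝ) else -1} := by
    intro c
    ext ω
    simp only [Set.mem_setOf_eq, Set.mem_iUnion, Finset.mem_filter, Finset.mem_univ,
      true_and, Set.mem_iInter, Set.mem_preimage, Set.mem_singleton_iff]
    constructor
    · intro h
      refine ⟨fun i => decide (η i ω = 1), ?_, fun i => hηeq ω i⟩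
      have hsum : ∑ i, w i * η i ω
          = ∑ i, w i * (if decide (η i ω = 1) then (1 : ℝ) else -1) :=
        Finset.sum_congr rfl fun i _ => by rw [← hηeq ω i]
      rwa [← hsum]
    · rintro ⟨s, hs, hω⟩
      have hsum : ∑ i, w i * η i ω = ∑ i, w i * (if s i then (1 : ℝ) else -1) :=
        Finset.sum_congr rfl fun i _ => by rw [hω i]
      rwa [hsum]
  -- splitting a sum over all sign vectors into antipodal pairs
  have huniv : ∀ f : (Fin n → Bool) → ℝ,
      ∑ s, f s = ∑ s ∈ V, (f s + f (fun i => !s i)) := by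
    intro f
    have hcover : (Finset.univ : Finset (Fin n → Bool))
        = V ∪ V.image (fun s i => !s i) := by
      ext s
      simp only [Finset.mem_univ, true_iff, Finset.mem_union, Finset.mem_image]
      by_cases h : s ∈ V
      · exact Or.inl h
      · have hmem : (fun i => !s i) ∈ V := by
          by_contra h2
          exact h ((hV s).mpr h2)
        exact Or.inr ⟨fun i => !s i, hmem, by funext i; simp⟩
    have hdisjV : Disjoint V (V.image (fun s i => !s i)) := by
      rw [Finset.disjoint_left]
      intro t htV htimg
      obtain ⟨u, hu, rfl⟩ := Finset.mem_image.mp htimg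
      exact (hV u).mp hu htV
    rw [show (∑ s, f s) = ∑ s ∈ V ∪ V.image (fun s i => !s i), f s from by rw [← hcover]]
    rw [Finset.sum_union hdisjV,
      Finset.sum_image (fun a _ b _ hab => funext fun i => Bool.not_inj (congrFun hab i)),
      ← Finset.sum_add_distrib]
  constructor
  · -- positive part
    have h1 : {ω | 0 < ∑ i, w i * η i ω}
        = ⋃ s ∈ Finset.univ.filter
            (fun s : Fin n → Bool => 0 < ∑ i, w i * (if s i then (1 : ℝ) else -1)),
          ⋂ i, η i ⁻¹' {if s i then (1 : ℝ) else -1} := hset (fun x => 0 < x)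
    rw [h1, hU]
    congr 1
    rw [Finset.sum_filter, huniv]
    refine Finset.sum_congr rfl fun s _ => ?_
    by_cases h : 0 < ∑ i, w i * (if s i then (1 : ℝ) else -1)
    · have h2 : ¬ (0 < ∑ i, w i * (if !s i then (1 : ℝ) else -1)) := by
        rw [hTneg s]; linarith
      have h3 : P (fun i => !s i) < P s := (hkey s).mp h
      simp only [if_pos h, if_neg h2, add_zero, max_eq_left h3.le]
    · have hlt : ∑ i, w i * (if s i then (1 : ℝ) else -1) < 0 :=
        lt_of_le_of_ne (not_lt.mp h) (hne s)
      have h2 : 0 < ∑ i, w i * (if !s i then (1 : ℝ) else -1) := by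
        rw [hTneg s]; linarith
      have h3 := (hkey (fun i => !s i)).mp h2
      simp only [Bool.not_not] at h3
      simp only [if_neg h, if_pos h2, zero_add, max_eq_right h3.le]
  · -- nonpositive part
    have h1 : {ω | ∑ i, w i * η i ω ≤ 0}
        = ⋃ s ∈ Finset.univ.filter
            (fun s : Fin n → Bool => ∑ i, w i * (if s i then (1 : ℝ) else -1) ≤ 0),
          ⋂ i, η i ⁻¹' {if s i then (1 : ℝ) else -1} := hset (fun x => x ≤ 0)
    rw [h1, hU]
    congr 1
    rw [Finset.sum_filter, huniv]
    refine Finset.sum_congr rfl fun s _ => ?_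
    by_cases h : ∑ i, w i * (if s i then (1 : ℝ) else -1) ≤ 0
    · have hlt : ∑ i, w i * (if s i then (1 : ℝ) else -1) < 0 :=
        lt_of_le_of_ne h (hne s)
      have h2 : ¬ (∑ i, w i * (if !s i then (1 : ℝ) else -1) ≤ 0) := by
        rw [hTneg s]; linarith
      have h2' : 0 < ∑ i, w i * (if !s i then (1 : ℝ) else -1) := by
        rw [hTneg s]; linarith
      have h3 := (hkey (fun i => !s i)).mp h2'
      simp only [Bool.not_not] at h3
      simp only [if_pos h, if_neg h2, add_zero, min_eq_left h3.le]
    · have hpos : 0 < ∑ i, w i * (if s i then (1 : ℝ) else -1) := not_le.mp h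
      have h2 : ∑ i, w i * (if !s i then (1 : ℝ) else -1) ≤ 0 := by
        rw [hTneg s]; linarith
      have h3 : P (fun i => !s i) < P s := (hkey s).mp hpos
      simp only [if_neg h, if_pos h2, zero_add, min_eq_right h3.le]
end

section
/- Optimality of the Nitzan–Paroush rule: in the committee model with the truth Y uniform on {−1,+1}, expert votes X_i = η_i·Y with (η_1,…,η_n) independent of Y, and assuming Σ_{i=1}^n w_i η_i ≠ 0 for every η ∈ {−1,+1}^n, the rule f^OPT(x) = sign(Σ_{i=1}^n w_i x_i) minimizes the probability of error: for every function f : {−1,+1}^n → {−1,+1}, P(f^OPT(X) ≠ Y) ≤ P(f(X) ≠ Y). -/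
open MeasureTheory ProbabilityTheory

/-- Optimality of the Nitzan–Paroush weighted majority rule: with the truth `Y` uniform on
`{−1,+1}` and independent of the correctness indicators, votes `X i = η i * Y`, and assuming
no ties (`∑ w i * s i ≠ 0` for every sign vector `s`), the rule
`f^OPT x = sign (∑ w i * x i)` minimizes the probability of error among all decision rules. -/
theorem nitzan_paroush_optimality
    {Ω : Type*} [MeasurableSpace Ω] (μ : Measure Ω) [IsProbabilityMeasure μ]
    (n : ℕ) (hn : 1 ≤ n)
    (p : Fin n → ℝ) (hp : ∀ i, p i ∈ Set.Ioo (0 : ℝ) 1)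
    (η : Fin n → Ω → ℝ)
    (hηmeas : ∀ i, Measurable (η i))
    (hηval : ∀ i ω, η i ω = 1 ∨ η i ω = -1)
    (hηprob : ∀ i, μ {ω | η i ω = 1} = ENNReal.ofReal (p i))
    (hηind : iIndepFun η μ)
    (Y : Ω → ℝ) (hYmeas : Measurable Y)
    (hYval : ∀ ω, Y ω = 1 ∨ Y ω = -1)
    (hYunif : μ {ω | Y ω = 1} = ENNReal.ofReal (1/2))
    (hYind : IndepFun (fun ω i => η i ω) Y μ)
    (w : Fin n → ℝ) (hw : ∀ i, w i = Real.log (p i / (1 - p i)))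
    (hne : ∀ s : Fin n → ℝ, (∀ i, s i = 1 ∨ s i = -1) → ∑ i, w i * s i ≠ 0)
    (X : Fin n → Ω → ℝ) (hX : ∀ i ω, X i ω = η i ω * Y ω)
    (fopt : (Fin n → ℝ) → ℝ)
    (hfopt : ∀ x, fopt x = if 0 < ∑ i, w i * x i then 1 else -1)
    (f : (Fin n → ℝ) → ℝ) (hf : ∀ x, f x = 1 ∨ f x = -1) :
    μ {ω | fopt (fun i => X i ω) ≠ Y ω} ≤ μ {ω | f (fun i => X i ω) ≠ Y ω} := by
  classical
  -- basic positivity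
  have hq : ∀ i, 0 < 1 - p i := fun i => by have := (hp i).2; linarith
  -- sign vectors indexed by boolean vectors
  set sg : (Fin n → Bool) → (Fin n → ℝ) := fun b i => if b i then 1 else -1 with hsgdef
  set c : Bool → ℝ := fun y => if y then 1 else -1 with hcdef
  set r : (Fin n → Bool) → Fin n → ℝ := fun b i => if b i then p i else 1 - p i with hrdef
  set P : (Fin n → Bool) → ℝ := fun b => ∏ i, r b i with hPdef
  set nb : (Fin n → Bool) → (Fin n → Bool) := fun b i => !(b i) with hnbdef
  have hrpos : ∀ b i, 0 < r b i := by
    intro b i; by_cases h : b i <;> simp [r, h, (hp i).1, hq i]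
  have hPpos : ∀ b, 0 < P b := fun b => Finset.prod_pos fun i _ => hrpos b i
  -- measure of η i = -1
  have hηprob' : ∀ i, μ {ω | η i ω = -1} = ENNReal.ofReal (1 - p i) := by
    intro i
    have hc1 : {ω | η i ω = -1} = {ω | η i ω = 1}ᶜ := by
      ext ω; simp only [Set.mem_setOf_eq, Set.mem_compl_iff]
      rcases hηval i ω with h | h <;> simp [h] <;> norm_num
    have hm : MeasurableSet {ω | η i ω = 1} := (hηmeas i) (measurableSet_singleton 1)
    rw [hc1, measure_compl hm (measure_ne_top μ _), hηprob i, measure_univ,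
      ← ENNReal.ofReal_one, ← ENNReal.ofReal_sub _ (le_of_lt (hp i).1)]
  -- measure of η i = sg b i
  have hηsg : ∀ b i, μ ((η i) ⁻¹' {sg b i}) = ENNReal.ofReal (r b i) := by
    intro b i
    have hpre : ∀ v : ℝ, (η i) ⁻¹' {v} = {ω | η i ω = v} := fun v => rfl
    by_cases h : b i
    · rw [hpre]; simp only [sg, r, h, if_true]; exact hηprob i
    · rw [hpre]; simp only [sg, r, h, if_false]; exact hηprob' i
  -- measure of the η sign-vector event
  have hvec : ∀ b, μ {ω | (fun i => η i ω) = sg b} = ENNReal.ofReal (P b) := by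
    intro b
    have hs : {ω | (fun i => η i ω) = sg b} = ⋂ i, (η i) ⁻¹' {sg b i} := by
      ext ω; simp [funext_iff]
    rw [hs, hηind.meas_iInter (fun i => ⟨{sg b i}, measurableSet_singleton _, rfl⟩)]
    rw [hPdef, ENNReal.ofReal_prod_of_nonneg (fun i _ => (hrpos b i).le)]
    exact Finset.prod_congr rfl fun i _ => hηsg b i
  -- measure of Y = -1
  have hYhalf : ∀ y : Bool, μ {ω | Y ω = c y} = ENNReal.ofReal (1/2) := by
    intro y
    cases y
    · have hc1 : {ω | Y ω = c false} = {ω | Y ω = 1}ᶜ := by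
        ext ω; simp only [Set.mem_setOf_eq, Set.mem_compl_iff, c]
        rcases hYval ω with h | h <;> simp [h] <;> norm_num
      have hm : MeasurableSet {ω | Y ω = 1} := hYmeas (measurableSet_singleton 1)
      rw [hc1, measure_compl hm (measure_ne_top μ _), hYunif, measure_univ,
        ← ENNReal.ofReal_one, ← ENNReal.ofReal_sub]
      · norm_num
      · norm_num
    · simpa [c] using hYunif
  -- the atoms of the partition
  set A : (Fin n → Bool) → Bool → Set Ω :=
    fun b y => {ω | (fun i => η i ω) = sg b ∧ Y ω = c y} with hAdef
  have hAmeas : ∀ b y, MeasurableSet (A b y) := by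
    intro b y
    have : A b y = (⋂ i, (η i) ⁻¹' {sg b i}) ∩ Y ⁻¹' {c y} := by
      ext ω; simp [A, funext_iff]
    rw [this]
    exact (MeasurableSet.iInter fun i =>
      (hηmeas i) (measurableSet_singleton _)).inter (hYmeas (measurableSet_singleton _))
  have hAμ : ∀ b y, μ (A b y) = ENNReal.ofReal (P b) * ENNReal.ofReal (1/2) := by
    intro b y
    have h1 : A b y = (fun ω i => η i ω) ⁻¹' {sg b} ∩ Y ⁻¹' {c y} := by
      ext ω; simp [A]
    rw [h1, hYind.measure_inter_preimage_eq_mul _ _ (measurableSet_singleton _)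
      (measurableSet_singleton _)]
    have h2 : (fun ω i => η i ω) ⁻¹' {sg b} = {ω | (fun i => η i ω) = sg b} := rfl
    have h3 : Y ⁻¹' {c y} = {ω | Y ω = c y} := rfl
    rw [h2, h3, hvec b, hYhalf y]
  -- the error event of any rule, as a finite sum over the atoms
  have hErr : ∀ g : (Fin n → ℝ) → ℝ,
      μ {ω | g (fun i => X i ω) ≠ Y ω} =
        ∑ z : (Fin n → Bool) × Bool,
          (if g (fun i => sg z.1 i * c z.2) ≠ c z.2
            then ENNReal.ofReal (P z.1) * ENNReal.ofReal (1/2) else 0) := by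
    intro g
    set D : (Fin n → Bool) × Bool → Set Ω :=
      fun z => if g (fun i => sg z.1 i * c z.2) ≠ c z.2 then A z.1 z.2 else ∅ with hDdef
    have hDif : ∀ z, D z = if g (fun i => sg z.1 i * c z.2) ≠ c z.2 then A z.1 z.2 else ∅ :=
      fun z => by rw [hDdef]
    have hDsub : ∀ z ω, ω ∈ D z →
        ((fun i => η i ω) = sg z.1 ∧ Y ω = c z.2) ∧ g (fun i => sg z.1 i * c z.2) ≠ c z.2 := by
      intro z ω hωD
      rw [hDif z] at hωD
      by_cases h : g (fun i => sg z.1 i * c z.2) ≠ c z.2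
      · rw [if_pos h] at hωD; exact ⟨hωD, h⟩
      · rw [if_neg h] at hωD; exact absurd hωD (Set.notMem_empty ω)
    have hset : {ω | g (fun i => X i ω) ≠ Y ω} = ⋃ z, D z := by
      ext ω
      simp only [Set.mem_setOf_eq, Set.mem_iUnion]
      constructor
      · intro hg
        refine ⟨⟨fun i => if η i ω = 1 then true else false, if Y ω = 1 then true else false⟩, ?_⟩
        have hb : (fun i => η i ω) = sg (fun i => if η i ω = 1 then true else false) := by
          funext i
          rcases hηval i ω with h | h <;> simp [sg, h] <;> norm_num
        have hy : Y ω = c (if Y ω = 1 then true else false) := by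
          rcases hYval ω with h | h <;> simp [c, h] <;> norm_num
        have hXv : (fun i => X i ω) =
            (fun i => sg (fun i => if η i ω = 1 then true else false) i
              * c (if Y ω = 1 then true else false)) := by
          funext i
          rw [hX i ω, ← hy, ← congrFun hb i]
        have hcond : g (fun i => sg (fun i => if η i ω = 1 then true else false) i
            * c (if Y ω = 1 then true else false)) ≠ c (if Y ω = 1 then true else false) := by
          rw [← hXv, ← hy]; exact hg
        rw [hDif _, if_pos hcond]
        exact ⟨hb, by rw [← hy]⟩
      · rintro ⟨z, hωD⟩
        obtain ⟨⟨hb, hy⟩, hcond⟩ := hDsub z ω hωD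
        have hXv : (fun i => X i ω) = fun i => sg z.1 i * c z.2 := by
          funext i; rw [hX i ω, ← hy, ← congrFun hb i]
        rw [hXv, hy]; exact hcond
    have hsginj : Function.Injective sg := by
      intro b b' hbb'
      funext i
      have := congrFun hbb' i
      by_cases h : b i <;> by_cases h' : b' i <;> simp [sg, h, h'] at this ⊢ <;> norm_num at this
    have hcinj : Function.Injective c := by
      intro y y' hyy'
      cases y <;> cases y' <;> simp [c] at hyy' ⊢ <;> norm_num at hyy'
    have hdisj : Pairwise (Function.onFun Disjoint D) := by
      intro z z' hzz'
      rw [Function.onFun]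
      rw [Set.disjoint_left]
      intro ω h1 h2
      obtain ⟨⟨hb1, hy1⟩, _⟩ := hDsub z ω h1
      obtain ⟨⟨hb2, hy2⟩, _⟩ := hDsub z' ω h2
      exact hzz' (Prod.ext (hsginj (hb1.symm.trans hb2)) (hcinj (hy1.symm.trans hy2)))
    have hDmeas : ∀ z, MeasurableSet (D z) := by
      intro z
      rw [hDif z]
      split_ifs
      · exact hAmeas z.1 z.2
      · exact MeasurableSet.empty
    rw [hset, measure_iUnion hdisj hDmeas, tsum_fintype]
    refine Finset.sum_congr rfl fun z _ => ?_
    rw [hDif z]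
    split_ifs with h
    · exact hAμ z.1 z.2
    · exact measure_empty
  -- regroup: sum over b of the two contributions with matched vote vector sg b
  have hsgneg : ∀ b : Fin n → Bool, (fun i => sg (nb b) i * c false) = sg b := by
    intro b; funext i; by_cases h : b i <;> simp [sg, c, nb, h]
  have hreindex : ∀ F : (Fin n → Bool) → ENNReal, ∑ b, F b = ∑ b, F (nb b) := by
    intro F
    refine (Fintype.sum_bijective nb (Function.Involutive.bijective ?_) _ _ fun b => rfl).symm
    intro b; funext i; simp [nb]
  have hgroup : ∀ g : (Fin n → ℝ) → ℝ,
      μ {ω | g (fun i => X i ω) ≠ Y ω} =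
        ∑ b : Fin n → Bool,
          ((if g (sg b) ≠ 1 then ENNReal.ofReal (P b) * ENNReal.ofReal (1/2) else 0)
          + (if g (sg b) ≠ -1 then ENNReal.ofReal (P (nb b)) * ENNReal.ofReal (1/2) else 0)) := by
    intro g
    rw [hErr g, Fintype.sum_prod_type]
    have hb1 : ∀ b : Fin n → Bool, (∑ y : Bool,
        (if g (fun i => sg b i * c y) ≠ c y
          then ENNReal.ofReal (P b) * ENNReal.ofReal (1/2) else 0)) =
        (if g (fun i => sg b i * c true) ≠ c true
          then ENNReal.ofReal (P b) * ENNReal.ofReal (1/2) else 0)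
        + (if g (fun i => sg b i * c false) ≠ c false
          then ENNReal.ofReal (P b) * ENNReal.ofReal (1/2) else 0) := fun b => Fintype.sum_bool _
    rw [Finset.sum_congr rfl fun b _ => hb1 b, Finset.sum_add_distrib]
    have h2 : (∑ b : Fin n → Bool, (if g (fun i => sg b i * c false) ≠ c false
          then ENNReal.ofReal (P b) * ENNReal.ofReal (1/2) else 0)) =
        ∑ b : Fin n → Bool, (if g (sg b) ≠ -1
          then ENNReal.ofReal (P (nb b)) * ENNReal.ofReal (1/2) else 0) := by
      rw [hreindex (fun b => (if g (fun i => sg b i * c false) ≠ c false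
          then ENNReal.ofReal (P b) * ENNReal.ofReal (1/2) else 0))]
      refine Finset.sum_congr rfl fun b _ => ?_
      rw [hsgneg b]
      simp only [c]
      norm_num
    have h1 : (∑ b : Fin n → Bool, (if g (fun i => sg b i * c true) ≠ c true
          then ENNReal.ofReal (P b) * ENNReal.ofReal (1/2) else 0)) =
        ∑ b : Fin n → Bool, (if g (sg b) ≠ 1
          then ENNReal.ofReal (P b) * ENNReal.ofReal (1/2) else 0) := by
      refine Finset.sum_congr rfl fun b _ => ?_
      have : (fun i => sg b i * c true) = sg b := by funext i; simp [c]
      rw [this]; simp [c]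
    rw [h1, h2, ← Finset.sum_add_distrib]
  -- key monotonicity: sign of the weighted sum vs comparison of atom probabilities
  have hkey : ∀ b : Fin n → Bool, (∑ i, w i * sg b i) = Real.log (P b) - Real.log (P (nb b)) := by
    intro b
    have hterm : ∀ i : Fin n, w i * sg b i = Real.log (r b i) - Real.log (r (nb b) i) := by
      intro i
      have hlog : Real.log (p i / (1 - p i)) = Real.log (p i) - Real.log (1 - p i) :=
        Real.log_div (ne_of_gt (hp i).1) (ne_of_gt (hq i))
      rw [hw i, hlog]
      by_cases h : b i
      · simp [sg, r, nb, h]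
        try ring
      · simp [sg, r, nb, h]
        try ring
    rw [Finset.sum_congr rfl fun i _ => hterm i, Finset.sum_sub_distrib,
      hPdef, Real.log_prod (fun i _ => ne_of_gt (hrpos b i)),
      Real.log_prod (fun i _ => ne_of_gt (hrpos (nb b) i))]
  have hmono1 : ∀ b : Fin n → Bool, 0 < (∑ i, w i * sg b i) → P (nb b) ≤ P b := by
    intro b hb
    rw [hkey b, sub_pos, Real.log_lt_log_iff (hPpos (nb b)) (hPpos b)] at hb
    exact hb.le
  have hmono2 : ∀ b : Fin n → Bool, ¬ (0 < ∑ i, w i * sg b i) → P b ≤ P (nb b) := by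
    intro b hb
    rw [not_lt] at hb
    rw [hkey b, sub_nonpos, Real.log_le_log_iff (hPpos b) (hPpos (nb b))] at hb
    exact hb
  -- conclude by termwise comparison
  rw [hgroup fopt, hgroup f]
  refine Finset.sum_le_sum fun b _ => ?_
  have hfoptb : fopt (sg b) = if 0 < ∑ i, w i * sg b i then 1 else -1 := hfopt (sg b)
  by_cases hl : 0 < ∑ i, w i * sg b i
  · rw [hfoptb]
    simp only [hl, if_true]
    have h11 : ¬ ((1:ℝ) ≠ 1) := by norm_num
    have h1m : (1:ℝ) ≠ -1 := by norm_num
    simp only [h11, h1m, if_true, if_false, zero_add, ne_eq, not_true_eq_false,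
      not_false_eq_true]
    have hle : ENNReal.ofReal (P (nb b)) * ENNReal.ofReal (1/2) ≤
        ENNReal.ofReal (P b) * ENNReal.ofReal (1/2) :=
      mul_le_mul_left (ENNReal.ofReal_le_ofReal (hmono1 b hl)) _
    rcases hf (sg b) with hfb | hfb <;> rw [hfb]
    · simp only [h11, h1m, ne_eq, not_true_eq_false, not_false_eq_true, if_true, if_false]
      simp
    · have hm1 : (-1:ℝ) ≠ 1 := by norm_num
      have hmm : ¬ ((-1:ℝ) ≠ -1) := by norm_num
      simp only [hm1, hmm, ne_eq, not_false_eq_true, not_true_eq_false, if_true, if_false,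
        add_zero]
      exact hle
  · rw [hfoptb]
    simp only [hl, if_false]
    have hm1 : (-1:ℝ) ≠ 1 := by norm_num
    have hmm : ¬ ((-1:ℝ) ≠ -1) := by norm_num
    simp only [hm1, hmm, ne_eq, not_false_eq_true, not_true_eq_false, if_true, if_false,
      add_zero]
    have hle : ENNReal.ofReal (P b) * ENNReal.ofReal (1/2) ≤
        ENNReal.ofReal (P (nb b)) * ENNReal.ofReal (1/2) :=
      mul_le_mul_left (ENNReal.ofReal_le_ofReal (hmono2 b hl)) _
    rcases hf (sg b) with hfb | hfb <;> rw [hfb]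
    · have h11 : ¬ ((1:ℝ) ≠ 1) := by norm_num
      have h1m : (1:ℝ) ≠ -1 := by norm_num
      simp only [h11, h1m, ne_eq, not_true_eq_false, not_false_eq_true, if_true, if_false,
        zero_add]
      exact hle
    · simp only [hm1, hmm, ne_eq, not_false_eq_true, not_true_eq_false, if_true, if_false,
        add_zero]
      simp
end

section
/- Lemma 4: Define F : (0,1) → ℝ by F(x) = x(1−x)·log(x/(1−x))/(2x−1) for x ≠ 1/2 and F(1/2) = 1/2 (the value by continuity). Then sup_{0<x<1} F(x) = 1/2; in particular, for every x ∈ (0,1) with x ≠ 1/2, x(1−x)·log(x/(1−x))/(2x−1) ≤ 1/2. -/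
lemma F_le_half_aux (x : ℝ) (hx : x ∈ Set.Ioo (0 : ℝ) 1) (hne : x ≠ 1/2) :
    x * (1 - x) * Real.log (x / (1 - x)) / (2 * x - 1) ≤ 1/2 := by
  obtain ⟨hx0, hx1⟩ := hx
  have h1x : 0 < 1 - x := by linarith
  have ht : 0 < x / (1 - x) := div_pos hx0 h1x
  set u := Real.log (x / (1 - x)) with hu
  have hsinh : Real.sinh u = (x / (1 - x) - (x / (1 - x))⁻¹) / 2 := Real.sinh_log ht
  have hkey : x * (1 - x) * Real.sinh u = (2 * x - 1) / 2 := by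
    rw [hsinh]; field_simp; ring
  rcases lt_or_gt_of_ne hne with h | h
  · -- x < 1/2, so 2x-1 < 0, t < 1, u < 0
    have hc : 2 * x - 1 < 0 := by linarith
    have htlt : x / (1 - x) < 1 := (div_lt_one h1x).2 (by linarith)
    have hu0 : u < 0 := Real.log_neg ht htlt
    have hsu : Real.sinh u < u := by
      have := (Real.self_lt_sinh_iff (x := -u)).2 (by linarith)
      rw [Real.sinh_neg] at this; linarith
    rw [div_le_iff_of_neg hc]
    nlinarith [mul_pos hx0 h1x]
  · have hc : 0 < 2 * x - 1 := by linarith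
    have htgt : 1 < x / (1 - x) := (one_lt_div h1x).2 (by linarith)
    have hu0 : 0 < u := Real.log_pos htgt
    have hsu : u < Real.sinh u := (Real.self_lt_sinh_iff).2 hu0
    rw [div_le_iff₀ hc]
    nlinarith [mul_pos hx0 h1x]

/-- Lemma 4: the function `F(x) = x(1−x)·log(x/(1−x))/(2x−1)` (with `F(1/2) = 1/2` by
continuity) has supremum `1/2` on `(0,1)`; in particular `F(x) ≤ 1/2` for all
`x ∈ (0,1)` with `x ≠ 1/2`. -/
theorem sup_F_eq_half :
    sSup ((fun x : ℝ => if x = 1/2 then 1/2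
        else x * (1 - x) * Real.log (x / (1 - x)) / (2 * x - 1)) '' Set.Ioo (0 : ℝ) 1)
      = 1/2 ∧
    ∀ x : ℝ, x ∈ Set.Ioo (0 : ℝ) 1 → x ≠ 1/2 →
      x * (1 - x) * Real.log (x / (1 - x)) / (2 * x - 1) ≤ 1/2 := by
  have hub : ∀ y ∈ ((fun x : ℝ => if x = 1/2 then 1/2
      else x * (1 - x) * Real.log (x / (1 - x)) / (2 * x - 1)) '' Set.Ioo (0 : ℝ) 1),
      y ≤ (1/2 : ℝ) := by
    rintro y ⟨x, hx, rfl⟩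
    by_cases h : x = 1/2
    · simp [h]
    · simp only [if_neg h]; exact F_le_half_aux x hx h
  constructor
  · apply le_antisymm
    · exact csSup_le ⟨_, ⟨1/2, ⟨by norm_num, by norm_num⟩, rfl⟩⟩ hub
    · apply le_csSup ⟨1/2, hub⟩
      exact ⟨1/2, ⟨by norm_num, by norm_num⟩, by simp⟩
  · exact fun x hx h => F_le_half_aux x hx h
end

section
/- Weight–variance inequality (consequence of Lemma 4): for every p ∈ (0,1), with q = 1 − p and w = log(p/q), one has p·q·w² ≤ (1/2)·(p − q)·w. -/
/-- Weight–variance inequality: for `p ∈ (0,1)`, `q = 1 − p` and `w = log(p/q)`,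
one has `p·q·w² ≤ (1/2)·(p − q)·w`. -/
theorem weight_variance_inequality
    (p : ℝ) (hp : p ∈ Set.Ioo (0 : ℝ) 1) (q w : ℝ)
    (hq : q = 1 - p) (hw : w = Real.log (p / q)) :
    p * q * w ^ 2 ≤ (1/2) * (p - q) * w := by
  obtain ⟨hp0, hp1⟩ := hp
  have hq0 : 0 < q := by rw [hq]; linarith
  have hpq : p + q = 1 := by rw [hq]; ring
  have hsinh : Real.sinh w = (p - q) / (2 * p * q) := by
    rw [hw, Real.sinh_eq, Real.exp_log (by positivity), ← Real.log_inv,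
      Real.exp_log (by positivity)]
    have : (p / q)⁻¹ = q / p := by field_simp
    rw [this]
    field_simp
    linear_combination (p - q) * hpq
  rcases le_or_gt 0 w with h0 | h0
  · have h1 : w ≤ (p - q) / (2 * p * q) := by
      rw [← hsinh]; exact Real.self_le_sinh_iff.mpr h0
    have h2 : 2 * p * q * w ≤ p - q := by
      rw [← le_div_iff₀' (by positivity)]; exact h1
    nlinarith [mul_nonneg (mul_nonneg hp0.le hq0.le) h0]
  · have h1 : (p - q) / (2 * p * q) ≤ w := by
      rw [← hsinh]; exact Real.sinh_le_self_iff.mpr h0.le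
    have h2 : p - q ≤ 2 * p * q * w := by
      rw [← div_le_iff₀' (by positivity)]; exact h1
    nlinarith [mul_nonneg (mul_nonneg hp0.le hq0.le) (neg_nonneg.mpr h0.le)]
end

section
/- Concentration of the weighted vote: in the committee model, if Φ > 0 then P(2Φ − 4√Φ ≤ Σ_{i=1}^n w_i η_i ≤ 2Φ + 4√Φ) ≥ 3/4. -/
open MeasureTheory ProbabilityTheory

private lemma aux_log_le {x : ℝ} (hx : 1 ≤ x) : Real.log x ≤ (x - x⁻¹) / 2 := by
  have hmono : MonotoneOn (fun y : ℝ => (y - y⁻¹) / 2 - Real.log y) (Set.Ici 1) := by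
    have hd : ∀ y : ℝ, 0 < y → HasDerivAt (fun y : ℝ => (y - y⁻¹) / 2 - Real.log y)
        ((1 - -(y ^ 2)⁻¹) / 2 - y⁻¹) y := by
      intro y hy
      exact (((hasDerivAt_id y).sub (hasDerivAt_inv hy.ne')).div_const 2).sub
        (Real.hasDerivAt_log hy.ne')
    apply monotoneOn_of_deriv_nonneg (convex_Ici 1)
    · apply ContinuousOn.sub
      · apply ContinuousOn.div_const
        apply ContinuousOn.sub continuousOn_id
        exact ContinuousOn.inv₀ continuousOn_id
          (fun y hy => by simp only [Set.mem_Ici] at hy; intro h; simp [h] at hy; linarith)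
      · exact Real.continuousOn_log.mono
          (fun y hy => by simp only [Set.mem_Ici] at hy; simp; linarith)
    · intro y hy
      rw [interior_Ici] at hy
      have hy0 : (0:ℝ) < y := lt_trans one_pos hy
      exact ((hd y hy0).differentiableAt).differentiableWithinAt
    · intro y hy
      rw [interior_Ici] at hy
      have hy0 : (0:ℝ) < y := lt_trans one_pos hy
      rw [(hd y hy0).deriv]
      have heq : (1 - -(y ^ 2)⁻¹) / 2 - y⁻¹ = (y - 1) ^ 2 / (2 * y ^ 2) := by
        field_simp
        ring
      rw [heq]
      positivity
  have h1 := hmono Set.self_mem_Ici (Set.mem_Ici.mpr hx) hx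
  simp only [Real.log_one, inv_one] at h1
  norm_num at h1
  linarith

private lemma pq_half {p : ℝ} (hp1 : p < 1) (h : 1/2 ≤ p) :
    p * (1 - p) * Real.log (p / (1 - p)) ^ 2 ≤ (p - 1/2) * Real.log (p / (1 - p)) := by
  have hq0 : 0 < 1 - p := by linarith
  have hp0 : 0 < p := by linarith
  set L := Real.log (p / (1 - p)) with hL
  have hx1 : 1 ≤ p / (1 - p) := (one_le_div hq0).mpr (by linarith)
  have hL0 : 0 ≤ L := Real.log_nonneg hx1
  have hle := aux_log_le hx1
  rw [inv_div] at hle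
  have heq : (p / (1 - p) - (1 - p) / p) / 2 = (p - 1/2) / (p * (1 - p)) := by
    field_simp
    ring
  rw [heq] at hle
  have key : L * (p * (1 - p)) ≤ p - 1/2 := (le_div_iff₀ (by positivity)).mp hle
  nlinarith [mul_le_mul_of_nonneg_right key hL0]

private lemma pq_log_sq_le {p : ℝ} (hp0 : 0 < p) (hp1 : p < 1) :
    p * (1 - p) * Real.log (p / (1 - p)) ^ 2 ≤ (p - 1/2) * Real.log (p / (1 - p)) := by
  rcases le_or_gt (1/2 : ℝ) p with h | h
  · exact pq_half hp1 h
  · have h2 := pq_half (by linarith : 1 - p < 1) (by linarith : 1/2 ≤ 1 - p)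
    have hq0 : 0 < 1 - p := by linarith
    have hlog : Real.log ((1 - p) / (1 - (1 - p))) = -Real.log (p / (1 - p)) := by
      rw [show (1 : ℝ) - (1 - p) = p by ring, show (1 - p) / p = (p / (1 - p))⁻¹ by
        rw [inv_div], Real.log_inv]
    rw [hlog] at h2
    nlinarith [h2]

/-- Concentration of the weighted vote: if `Φ > 0` then
`P(2Φ − 4√Φ ≤ ∑ w i * η i ≤ 2Φ + 4√Φ) ≥ 3/4`. -/
theorem weighted_vote_concentration
    {Ω : Type*} [MeasurableSpace Ω] (μ : Measure Ω) [IsProbabilityMeasure μ]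
    (n : ℕ) (hn : 1 ≤ n)
    (p : Fin n → ℝ) (hp : ∀ i, p i ∈ Set.Ioo (0 : ℝ) 1)
    (η : Fin n → Ω → ℝ)
    (hηmeas : ∀ i, Measurable (η i))
    (hηval : ∀ i ω, η i ω = 1 ∨ η i ω = -1)
    (hηprob : ∀ i, μ {ω | η i ω = 1} = ENNReal.ofReal (p i))
    (hηind : iIndepFun η μ)
    (w : Fin n → ℝ) (hw : ∀ i, w i = Real.log (p i / (1 - p i)))
    (Φ : ℝ) (hΦ : Φ = ∑ i, (p i - 1/2) * w i) (hΦpos : 0 < Φ) :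
    ENNReal.ofReal (3/4) ≤
      μ {ω | 2 * Φ - 4 * Real.sqrt Φ ≤ ∑ i, w i * η i ω ∧
             ∑ i, w i * η i ω ≤ 2 * Φ + 4 * Real.sqrt Φ} := by
  classical
  -- the measurable sets where each expert is correct
  set A : Fin n → Set Ω := fun i => {ω | η i ω = 1} with hA
  have hAmeas : ∀ i, MeasurableSet (A i) := fun i =>
    (hηmeas i) (measurableSet_singleton (1 : ℝ))
  -- each η i is Memℒp 2
  have hmem : ∀ i, MemLp (η i) 2 μ := by
    intro i
    refine memLp_of_bounded (a := -1) (b := 1) (Filter.Eventually.of_forall fun ω => ?_)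
      (hηmeas i).aestronglyMeasurable 2
    rcases hηval i ω with h | h <;> rw [h] <;> constructor <;> norm_num
  -- representation via indicator
  have hrepr : ∀ i, η i = fun ω => 2 * (A i).indicator (fun _ => (1:ℝ)) ω - 1 := by
    intro i
    funext ω
    rcases hηval i ω with h | h
    · have hωA : ω ∈ A i := h
      rw [Set.indicator_of_mem hωA, h]; norm_num
    · have hωA : ω ∉ A i := by
        intro hc
        rw [hA] at hc
        simp only [Set.mem_setOf_eq] at hc
        rw [hc] at h
        norm_num at h
      simp [Set.indicator_of_notMem hωA, h]
  -- expectation of η i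
  have hint : ∀ i, ∫ ω, η i ω ∂μ = 2 * p i - 1 := by
    intro i
    have hindint : Integrable ((A i).indicator (fun _ => (1:ℝ))) μ :=
      (integrable_const (1:ℝ)).indicator (hAmeas i)
    calc ∫ ω, η i ω ∂μ
        = ∫ ω, (2 * (A i).indicator (fun _ => (1:ℝ)) ω - 1) ∂μ := by rw [← hrepr i]
      _ = (∫ ω, 2 * (A i).indicator (fun _ => (1:ℝ)) ω ∂μ) - ∫ _, (1:ℝ) ∂μ :=
          integral_sub (hindint.const_mul 2) (integrable_const 1)
      _ = 2 * (∫ ω, (A i).indicator (fun _ => (1:ℝ)) ω ∂μ) - 1 := by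
          rw [integral_const_mul, integral_const]; simp
      _ = 2 * p i - 1 := by
          rw [integral_indicator_const (1:ℝ) (hAmeas i), measureReal_def, hηprob i,
            ENNReal.toReal_ofReal (hp i).1.le]
          simp
  -- variance of η i
  have hvar : ∀ i, variance (η i) μ = 1 - (2 * p i - 1) ^ 2 := by
    intro i
    rw [variance_eq_sub (hmem i)]
    have hsq : (η i) ^ 2 = fun _ : Ω => (1:ℝ) := by
      funext ω
      rcases hηval i ω with h | h <;> simp [Pi.pow_apply, h]
    rw [hsq, hint i]
    simp
  -- the scaled variables
  set Y : Fin n → Ω → ℝ := fun i ω => w i * η i ω with hY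
  have hYmem : ∀ i, MemLp (Y i) 2 μ := fun i => (hmem i).const_mul (w i)
  have hYint : ∀ i, Integrable (Y i) μ := fun i => (hYmem i).integrable one_le_two
  -- the sum
  set S : Ω → ℝ := fun ω => ∑ i, w i * η i ω with hS
  have hSsum : S = ∑ i, Y i := by
    funext ω
    simp [hS, hY, Finset.sum_apply]
  have hSmeas : Measurable S := by
    apply Finset.measurable_sum
    intro i _
    exact (hηmeas i).const_mul (w i)
  have hSmem : MemLp S 2 μ := by
    rw [hSsum]
    exact memLp_finset_sum' _ fun i _ => hYmem i
  -- expectation of S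
  have hES : ∫ ω, S ω ∂μ = 2 * Φ := by
    rw [hS]
    rw [integral_finset_sum _ fun i _ => hYint i]
    have : ∀ i, ∫ ω, w i * η i ω ∂μ = 2 * ((p i - 1/2) * w i) := by
      intro i
      rw [integral_const_mul, hint i]
      ring
    rw [Finset.sum_congr rfl fun i _ => this i, ← Finset.mul_sum, ← hΦ]
  -- variance of S
  have hVarS : variance S μ ≤ 4 * Φ := by
    have hVsum : variance S μ = ∑ i, variance (Y i) μ := by
      rw [hSsum]
      exact IndepFun.variance_sum (fun i _ => hYmem i)
        (fun i _ j _ hij => (hηind.indepFun hij).comp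
          (measurable_const_mul (w i)) (measurable_const_mul (w j)))
    rw [hVsum]
    have hterm : ∀ i, variance (Y i) μ ≤ 4 * ((p i - 1/2) * w i) := by
      intro i
      have : variance (Y i) μ = (w i) ^ 2 * (1 - (2 * p i - 1) ^ 2) := by
        rw [hY]
        simp only
        rw [variance_const_mul (w i) (η i) μ, hvar i]
      rw [this]
      have hpi := hp i
      have h1 := pq_log_sq_le hpi.1 hpi.2
      rw [← hw i] at h1
      nlinarith [h1]
    calc ∑ i, variance (Y i) μ ≤ ∑ i, 4 * ((p i - 1/2) * w i) :=
          Finset.sum_le_sum fun i _ => hterm i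
      _ = 4 * Φ := by rw [← Finset.mul_sum, ← hΦ]
  -- Chebyshev
  have hsqrt : 0 < Real.sqrt Φ := Real.sqrt_pos.mpr hΦpos
  have hc : (0:ℝ) < 4 * Real.sqrt Φ := by linarith
  have hcheb := meas_ge_le_variance_div_sq (μ := μ) hSmem hc
  rw [hES] at hcheb
  have hdiv : variance S μ / (4 * Real.sqrt Φ) ^ 2 ≤ 1/4 := by
    have hc2 : (4 * Real.sqrt Φ) ^ 2 = 16 * Φ := by
      rw [mul_pow, Real.sq_sqrt hΦpos.le]
      norm_num
    rw [hc2, div_le_div_iff₀ (by linarith) (by norm_num)]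
    linarith
  have hcheb2 : μ {ω | 4 * Real.sqrt Φ ≤ |S ω - 2 * Φ|} ≤ ENNReal.ofReal (1/4) :=
    le_trans hcheb (ENNReal.ofReal_le_ofReal hdiv)
  -- the good event
  set E : Set Ω := {ω | 2 * Φ - 4 * Real.sqrt Φ ≤ S ω ∧ S ω ≤ 2 * Φ + 4 * Real.sqrt Φ}
    with hE
  have hEmeas : MeasurableSet E :=
    (measurableSet_le measurable_const hSmeas).inter
      (measurableSet_le hSmeas measurable_const)
  have hcompl : Eᶜ ⊆ {ω | 4 * Real.sqrt Φ ≤ |S ω - 2 * Φ|} := by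
    intro ω hω
    simp only [hE, Set.mem_compl_iff, Set.mem_setOf_eq, not_and_or, not_le] at hω
    simp only [Set.mem_setOf_eq]
    have h1 := le_abs_self (S ω - 2 * Φ)
    have h2 := neg_abs_le (S ω - 2 * Φ)
    rcases hω with h | h <;> linarith
  have hEc : μ Eᶜ ≤ ENNReal.ofReal (1/4) :=
    le_trans (measure_mono hcompl) hcheb2
  have hEeq : μ E = 1 - μ Eᶜ := by
    have h1 := measure_add_measure_compl (μ := μ) hEmeas
    rw [measure_univ] at h1
    exact ENNReal.eq_sub_of_add_eq (measure_ne_top μ _) h1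
  have : ENNReal.ofReal (3/4) = 1 - ENNReal.ofReal (1/4) := by
    rw [← ENNReal.ofReal_one, ← ENNReal.ofReal_sub _ (by norm_num : (0:ℝ) ≤ 1/4)]
    norm_num
  calc ENNReal.ofReal (3/4) = 1 - ENNReal.ofReal (1/4) := this
    _ ≤ 1 - μ Eᶜ := tsub_le_tsub_left hEc 1
    _ = μ E := hEeq.symm
end

section
/- Kearns–Saul inequality: for every p ∈ (0,1) with p ≠ 1/2 and every t ∈ ℝ, (1−p)·e^{−tp} + p·e^{t(1−p)} ≤ exp( ((1 − 2p) / (4·log((1−p)/p))) · t² ). -/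
open Real Set

lemma KS_antitone : AntitoneOn (fun t : ℝ => Real.sinh t / Real.cosh t / t) (Set.Ioi 0) := by
  have hderiv : ∀ t : ℝ, 0 < t → HasDerivAt (fun t : ℝ => Real.sinh t / Real.cosh t / t)
      ((1 / Real.cosh t ^ 2 * t - Real.sinh t / Real.cosh t * 1) / t ^ 2) t := by
    intro t ht
    have h1 : HasDerivAt (fun t : ℝ => Real.sinh t / Real.cosh t) (1 / Real.cosh t ^ 2) t := by
      have := (Real.hasDerivAt_sinh t).div (Real.hasDerivAt_cosh t) (Real.cosh_pos t).ne'
      refine this.congr_deriv ?_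
      rw [← Real.cosh_sq_sub_sinh_sq t]
      ring
    exact h1.div (hasDerivAt_id t) ht.ne'
  apply antitoneOn_of_deriv_nonpos (convex_Ioi 0)
  · intro t ht
    exact ((hderiv t ht).continuousAt.continuousWithinAt)
  · intro t ht
    rw [interior_Ioi] at ht
    exact (hderiv t ht).differentiableAt.differentiableWithinAt
  · intro t ht
    rw [interior_Ioi] at ht
    rw [(hderiv t ht).deriv]
    have hc := Real.cosh_pos t
    have hs : t ≤ Real.sinh t * Real.cosh t := by
      have h1 : t ≤ Real.sinh t := (Real.self_lt_sinh_iff.mpr ht).le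
      nlinarith [Real.one_le_cosh t, Real.sinh_pos_iff.mpr ht]
    have hnum : 1 / Real.cosh t ^ 2 * t - Real.sinh t / Real.cosh t * 1 ≤ 0 := by
      rw [sub_nonpos, mul_one, div_mul_eq_mul_div, div_le_div_iff₀ (by positivity) hc]
      nlinarith
    exact div_nonpos_of_nonpos_of_nonneg hnum (sq_nonneg t)

lemma KS_cross {x y : ℝ} (hx : 0 < x) (hxy : x ≤ y) :
    x * Real.sinh y * Real.cosh x ≤ y * Real.sinh x * Real.cosh y := by
  have hy : 0 < y := hx.trans_le hxy
  have h := KS_antitone (Set.mem_Ioi.mpr hx) (Set.mem_Ioi.mpr hy) hxy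
  simp only at h
  rw [div_div, div_div, div_le_div_iff₀ (by positivity) (by positivity)] at h
  nlinarith [h]

lemma KS_logcosh_key {a : ℝ} (ha : 0 < a) (x : ℝ) :
    Real.log (Real.cosh x) ≤
      Real.log (Real.cosh a) + Real.sinh a / (2 * a * Real.cosh a) * (x ^ 2 - a ^ 2) := by
  set C : ℝ := Real.sinh a / (a * Real.cosh a) with hC
  set G : ℝ → ℝ := fun t => C / 2 * t ^ 2 - Real.log (Real.cosh t) with hG
  have hGd : ∀ t : ℝ, HasDerivAt G (C * t - Real.sinh t / Real.cosh t) t := by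
    intro t
    have h1 : HasDerivAt (fun t : ℝ => C / 2 * t ^ 2) (C * t) t := by
      have := (hasDerivAt_pow 2 t).const_mul (C / 2)
      refine this.congr_deriv ?_
      simp
      ring
    have h2 : HasDerivAt (fun t : ℝ => Real.log (Real.cosh t)) (Real.sinh t / Real.cosh t) t :=
      (Real.hasDerivAt_cosh t).log (Real.cosh_pos t).ne'
    exact h1.sub h2
  have hanti : AntitoneOn G (Set.Icc 0 a) := by
    apply antitoneOn_of_deriv_nonpos (convex_Icc 0 a)
    · exact fun t _ => (hGd t).continuousAt.continuousWithinAt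
    · intro t _
      exact (hGd t).differentiableAt.differentiableWithinAt
    · intro t ht
      rw [interior_Icc] at ht
      rw [(hGd t).deriv]
      obtain ⟨ht0, hta⟩ := ht
      have key := KS_cross ht0 hta.le
      have h1 : C * t ≤ Real.sinh t / Real.cosh t := by
        rw [hC, div_mul_eq_mul_div, div_le_div_iff₀ (by positivity) (Real.cosh_pos t)]
        nlinarith
      linarith
  have hmono : MonotoneOn G (Set.Ici a) := by
    apply monotoneOn_of_deriv_nonneg (convex_Ici a)
    · exact fun t _ => (hGd t).continuousAt.continuousWithinAt
    · intro t _
      exact (hGd t).differentiableAt.differentiableWithinAt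
    · intro t ht
      rw [interior_Ici] at ht
      rw [(hGd t).deriv]
      have ht0 : 0 < t := ha.trans ht
      have key := KS_cross ha ht.le
      have h1 : Real.sinh t / Real.cosh t ≤ C * t := by
        rw [hC, div_mul_eq_mul_div, div_le_div_iff₀ (Real.cosh_pos t) (by positivity)]
        nlinarith
      linarith
  have hmain : ∀ y : ℝ, 0 ≤ y → G a ≤ G y := by
    intro y hy
    rcases le_total y a with h | h
    · exact hanti ⟨hy, h⟩ ⟨ha.le, le_rfl⟩ h
    · exact hmono (Set.mem_Ici.mpr le_rfl) (Set.mem_Ici.mpr h) h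
  have hGx : G a ≤ G x := by
    rcases le_total 0 x with h | h
    · exact hmain x h
    · have hx : G x = G (-x) := by simp [hG, Real.cosh_neg]
      rw [hx]
      exact hmain (-x) (by linarith)
  have hC2 : Real.sinh a / (2 * a * Real.cosh a) = C / 2 := by
    rw [hC, div_div]
    congr 1
    ring
  simp only [hG] at hGx
  rw [hC2]
  nlinarith [hGx]

lemma KS_cosh_le {a : ℝ} (ha : a ≠ 0) (x : ℝ) :
    Real.cosh x ≤ Real.cosh a *
      Real.exp (Real.sinh a / (2 * a * Real.cosh a) * (x ^ 2 - a ^ 2)) := by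
  have main : ∀ b : ℝ, 0 < b → Real.cosh x ≤ Real.cosh b *
      Real.exp (Real.sinh b / (2 * b * Real.cosh b) * (x ^ 2 - b ^ 2)) := by
    intro b hb
    have h := KS_logcosh_key hb x
    calc Real.cosh x = Real.exp (Real.log (Real.cosh x)) :=
          (Real.exp_log (Real.cosh_pos x)).symm
      _ ≤ Real.exp (Real.log (Real.cosh b) +
            Real.sinh b / (2 * b * Real.cosh b) * (x ^ 2 - b ^ 2)) := Real.exp_le_exp.mpr h
      _ = _ := by rw [Real.exp_add, Real.exp_log (Real.cosh_pos b)]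
  rcases ha.lt_or_gt with h | h
  · have hb := main (-a) (by linarith)
    rw [Real.cosh_neg, neg_sq, Real.sinh_neg,
      show (2 : ℝ) * -a * Real.cosh a = -(2 * a * Real.cosh a) from by ring,
      neg_div_neg_eq] at hb
    exact hb
  · exact main a h



/-- Kearns–Saul inequality: for `p ∈ (0,1)`, `p ≠ 1/2` and all `t ∈ ℝ`,
`(1−p)e^{−tp} + pe^{t(1−p)} ≤ exp(((1 − 2p)/(4 log((1−p)/p)))·t²)`. -/
theorem kearns_saul_inequality
    (p : ℝ) (hp : p ∈ Set.Ioo (0 : ℝ) 1) (hp' : p ≠ 1/2) (t : ℝ) :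
    (1 - p) * Real.exp (-t * p) + p * Real.exp (t * (1 - p)) ≤
      Real.exp ((1 - 2 * p) / (4 * Real.log ((1 - p) / p)) * t ^ 2) := by
  obtain ⟨hp0, hp1⟩ := hp
  have hq : 0 < 1 - p := by linarith
  have hu : 0 < (1 - p) / p := by positivity
  have hu1 : (1 - p) / p ≠ 1 := by
    intro h
    apply hp'
    field_simp at h
    linarith
  set m : ℝ := Real.log ((1 - p) / p) with hm_def
  have hexp : Real.exp m = (1 - p) / p := Real.exp_log hu
  have hm : m ≠ 0 := by
    intro h
    apply hu1
    rw [← hexp, h, Real.exp_zero]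
  set E : ℝ := Real.exp (m / 2) with hE_def
  have hE : 0 < E := Real.exp_pos _
  have hE2 : E ^ 2 = (1 - p) / p := by
    rw [hE_def, ← hexp, sq, ← Real.exp_add]
    congr 1
    ring
  have hE2' : E ^ 2 * p = 1 - p := by
    rw [hE2]
    field_simp
  -- sinh and cosh of m/2
  have hsinh : Real.sinh (m / 2) = (E - E⁻¹) / 2 := by
    rw [Real.sinh_eq, Real.exp_neg, hE_def]
  have hcosh : Real.cosh (m / 2) = (E + E⁻¹) / 2 := by
    rw [Real.cosh_eq, Real.exp_neg, hE_def]
  have hcoshA : Real.cosh (m / 2) = 1 / (2 * p * E) := by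
    rw [hcosh]
    field_simp
    nlinarith [hE2']
  have hsinhB : Real.sinh (m / 2) = (1 - 2 * p) * Real.cosh (m / 2) := by
    rw [hsinh, hcosh]
    field_simp
    nlinarith [hE2']
  -- the key bound
  have hkey := KS_cosh_le (a := m / 2) (by simpa using hm) ((t - m) / 2)
  have hcoef : Real.sinh (m / 2) / (2 * (m / 2) * Real.cosh (m / 2)) = (1 - 2 * p) / m := by
    rw [hsinhB]
    rw [show (2 : ℝ) * (m / 2) = m from by ring]
    rw [mul_comm m (Real.cosh (m / 2)), ← div_div, mul_div_assoc,
      div_self (Real.cosh_pos (m / 2)).ne', mul_one]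
  rw [hcoef] at hkey
  -- rewrite the LHS
  have h1 : (1 - p) * Real.exp (-t * p) + p * Real.exp (t * (1 - p)) =
      p * Real.exp (-t * p) * (Real.exp t + (1 - p) / p) := by
    rw [show t * (1 - p) = t + -t * p from by ring, Real.exp_add]
    field_simp
    ring
  have e1 : Real.exp ((t + m) / 2) * Real.exp ((t - m) / 2) = Real.exp t := by
    rw [← Real.exp_add]
    congr 1
    ring
  have e2 : Real.exp ((t + m) / 2) * Real.exp (-((t - m) / 2)) = Real.exp m := by
    rw [← Real.exp_add]
    congr 1
    ring
  have h2 : Real.exp t + (1 - p) / p =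
      Real.exp ((t + m) / 2) * (2 * Real.cosh ((t - m) / 2)) := by
    rw [Real.cosh_eq, ← hexp]
    linear_combination -e1 - e2
  rw [h1, h2]
  have hP : 0 < p * Real.exp (-t * p) * Real.exp ((t + m) / 2) * 2 := by positivity
  calc p * Real.exp (-t * p) * (Real.exp ((t + m) / 2) * (2 * Real.cosh ((t - m) / 2)))
      = p * Real.exp (-t * p) * Real.exp ((t + m) / 2) * 2 * Real.cosh ((t - m) / 2) := by
        ring
    _ ≤ p * Real.exp (-t * p) * Real.exp ((t + m) / 2) * 2 *
          (Real.cosh (m / 2) *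
            Real.exp ((1 - 2 * p) / m * (((t - m) / 2) ^ 2 - (m / 2) ^ 2))) := by
        exact mul_le_mul_of_nonneg_left hkey hP.le
    _ = Real.exp (-t * p + (t + m) / 2 + -(m / 2) +
          (1 - 2 * p) / m * (((t - m) / 2) ^ 2 - (m / 2) ^ 2)) := by
        rw [hcoshA, Real.exp_add, Real.exp_add, Real.exp_add, Real.exp_neg, ← hE_def]
        field_simp
    _ = Real.exp ((1 - 2 * p) / (4 * m) * t ^ 2) := by
        congr 1
        field_simp
        ring
end

section
/- Per-expert moment generating function bound: let p ∈ (0,1) with p ≠ 1/2, set w = log(p/(1−p)), and let ξ be a {0,1}-valued random variable with P(ξ = 1) = p and θ = ξ − p. Then for every t ∈ ℝ, E[e^{−t w θ}] = p·e^{−(1−p)wt} + (1−p)·e^{pwt} ≤ exp( (1/2)·(p − 1/2)·w·t² ). -/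
noncomputable def qf (x w : ℝ) (s : ℝ) : ℝ := Real.exp (w*s) / (Real.exp (w*s) + x)
noncomputable def Df (p x w : ℝ) (s : ℝ) : ℝ := p + (1-2*p)*s/2 - qf x w s
noncomputable def D1f (p x w : ℝ) (s : ℝ) : ℝ := (1-2*p)/2 - w * (qf x w s * (1 - qf x w s))
noncomputable def Gf (p x w : ℝ) (s : ℝ) : ℝ :=
  w*(p*s + (1-2*p)*s^2/4) - (Real.log (Real.exp (w*s) + x) - Real.log (1+x))

lemma exp_add_pos {x w s : ℝ} (hx : 0 < x) : 0 < Real.exp (w*s) + x :=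
  add_pos (Real.exp_pos _) hx

lemma qf_hasDeriv {x : ℝ} (hx : 0 < x) (w s : ℝ) :
    HasDerivAt (qf x w) (w * (qf x w s * (1 - qf x w s))) s := by
  have he : HasDerivAt (fun s => Real.exp (w*s)) (Real.exp (w*s) * w) s := by
    have := ((hasDerivAt_id s).const_mul w).exp
    simpa using this
  have hd : HasDerivAt (fun s => Real.exp (w*s) + x) (Real.exp (w*s) * w) s :=
    he.add_const x
  have hne : Real.exp (w*s) + x ≠ 0 := (exp_add_pos hx).ne'
  have := he.div hd hne
  refine this.congr_deriv ?_
  unfold qf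
  field_simp

lemma Df_hasDeriv {x : ℝ} (hx : 0 < x) (p w s : ℝ) :
    HasDerivAt (Df p x w) (D1f p x w s) s := by
  have h1 : HasDerivAt (fun s => p + (1-2*p)*s/2) ((1-2*p)/2) s := by
    have : HasDerivAt (fun s : ℝ => p + (1-2*p)*s/2) (0 + (1-2*p)*1/2) s :=
      (hasDerivAt_const s p).add (((hasDerivAt_id s).const_mul (1-2*p)).div_const 2)
    simpa using this
  exact h1.sub (qf_hasDeriv hx w s)

lemma D1f_hasDeriv {x : ℝ} (hx : 0 < x) (p w s : ℝ) :
    HasDerivAt (D1f p x w) (-(w * (w * (qf x w s * (1 - qf x w s))) * (1 - 2 * qf x w s))) s := by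
  have hq := qf_hasDeriv hx w s
  have h2 : HasDerivAt (fun s => qf x w s * (1 - qf x w s))
      ((w * (qf x w s * (1 - qf x w s))) * (1 - 2 * qf x w s)) s := by
    have := hq.mul ((hasDerivAt_const s (1:ℝ)).sub hq)
    exact this.congr_deriv (by simp only [Pi.sub_apply]; ring)
  have := (hasDerivAt_const s ((1-2*p)/2)).sub (h2.const_mul w)
  exact this.congr_deriv (by ring)

lemma Gf_hasDeriv {x : ℝ} (hx : 0 < x) (p w s : ℝ) :
    HasDerivAt (Gf p x w) (w * Df p x w s) s := by
  have he : HasDerivAt (fun s => Real.exp (w*s)) (Real.exp (w*s) * w) s := by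
    have := ((hasDerivAt_id s).const_mul w).exp
    simpa using this
  have hd : HasDerivAt (fun s => Real.exp (w*s) + x) (Real.exp (w*s) * w) s :=
    he.add_const x
  have hne : Real.exp (w*s) + x ≠ 0 := (exp_add_pos hx).ne'
  have hlog : HasDerivAt (fun s => Real.log (Real.exp (w*s) + x))
      (Real.exp (w*s) * w / (Real.exp (w*s) + x)) s := hd.log hne
  have hpoly : HasDerivAt (fun s => w*(p*s + (1-2*p)*s^2/4))
      (w * (p + (1-2*p)*(2*s)/4)) s := by
    have : HasDerivAt (fun s : ℝ => p*s + (1-2*p)*s^2/4)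
        (p*1 + (1-2*p)*(2*s^1)/4) s :=
      ((hasDerivAt_id s).const_mul p).add
        (((hasDerivAt_pow 2 s).const_mul (1-2*p)).div_const 4)
    have h := this.const_mul w
    exact h.congr_deriv (by ring)
  have := hpoly.sub (hlog.sub_const (Real.log (1+x)))
  refine this.congr_deriv ?_
  unfold Df qf
  field_simp
  ring

section Core
variable {x : ℝ} (hx : 1 < x)

lemma qf_pos (hx0 : (0:ℝ) < x) (w s : ℝ) : 0 < qf x w s :=
  div_pos (Real.exp_pos _) (exp_add_pos hx0)

lemma qf_lt_one (hx0 : (0:ℝ) < x) (w s : ℝ) : qf x w s < 1 := by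
  unfold qf
  rw [div_lt_one (exp_add_pos hx0)]
  linarith [Real.exp_pos (w*s)]

lemma qf_ge_half (hx : 1 < x) {s : ℝ} (hs : 1 ≤ s) : 1/2 ≤ qf x (Real.log x) s := by
  have hx0 : (0:ℝ) < x := lt_trans one_pos hx
  have hw : 0 < Real.log x := Real.log_pos hx
  have hxe : x ≤ Real.exp (Real.log x * s) := by
    calc x = Real.exp (Real.log x) := (Real.exp_log hx0).symm
    _ ≤ Real.exp (Real.log x * s) := by
        apply Real.exp_le_exp.2; nlinarith
  unfold qf
  rw [div_le_div_iff₀ two_pos (exp_add_pos hx0)]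
  linarith

lemma Df_convex (hx : 1 < x) (p : ℝ) :
    ConvexOn ℝ (Set.Ici 1) (Df p x (Real.log x)) := by
  have hx0 : (0:ℝ) < x := lt_trans one_pos hx
  have hw : 0 < Real.log x := Real.log_pos hx
  set w := Real.log x with hwdef
  have hderiv : deriv (Df p x w) = D1f p x w :=
    funext fun s => (Df_hasDeriv hx0 p w s).deriv
  apply convexOn_of_deriv2_nonneg (convex_Ici 1)
  · exact fun s _ => (Df_hasDeriv hx0 p w s).continuousAt.continuousWithinAt
  · exact fun s _ => ((Df_hasDeriv hx0 p w s).differentiableAt).differentiableWithinAt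
  · rw [hderiv]
    exact fun s _ => ((D1f_hasDeriv hx0 p w s).differentiableAt).differentiableWithinAt
  · intro s hs
    rw [Function.iterate_succ, Function.iterate_one, Function.comp_apply, hderiv,
      (D1f_hasDeriv hx0 p w s).deriv]
    have hs1 : (1:ℝ) ≤ s := le_of_lt (by simpa using hs)
    have hq2 := qf_ge_half hx hs1
    have hq1 := qf_lt_one hx0 w s
    have hq0 := qf_pos hx0 w s
    rw [← hwdef] at *
    nlinarith [mul_nonneg (mul_nonneg (mul_pos hw hw).le
      (mul_nonneg hq0.le (by linarith : (0:ℝ) ≤ 1 - qf x w s)))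
      (by linarith : (0:ℝ) ≤ 2 * qf x w s - 1)]

lemma Df_one (hx : 1 < x) : Df (1/(1+x)) x (Real.log x) 1 = 0 := by
  have hx0 : (0:ℝ) < x := lt_trans one_pos hx
  have h1 : Real.exp (Real.log x * 1) = x := by
    rw [mul_one]; exact Real.exp_log hx0
  unfold Df qf
  rw [h1]
  field_simp
  ring

lemma Df_two (hx : 1 < x) : Df (1/(1+x)) x (Real.log x) 2 = 0 := by
  have hx0 : (0:ℝ) < x := lt_trans one_pos hx
  have h1 : Real.exp (Real.log x * 2) = x^2 := by
    rw [show Real.log x * 2 = (2:ℕ) * Real.log x by push_cast; ring,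
      Real.exp_nat_mul, Real.exp_log hx0]
  unfold Df qf
  rw [h1]
  have h2 : x^2 + x ≠ 0 := by nlinarith
  have h3 : (1:ℝ) + x ≠ 0 := by nlinarith
  field_simp
  ring

lemma Df_nonpos (hx : 1 < x) {s : ℝ} (h1 : 1 ≤ s) (h2 : s ≤ 2) :
    Df (1/(1+x)) x (Real.log x) s ≤ 0 := by
  have hc := Df_convex hx (1/(1+x))
  have := hc.2 (Set.mem_Ici.2 (le_refl 1)) (Set.mem_Ici.2 (by norm_num : (1:ℝ) ≤ 2))
    (show (0:ℝ) ≤ 2 - s by linarith) (show (0:ℝ) ≤ s - 1 by linarith)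
    (show (2 - s) + (s - 1) = 1 by ring)
  simp only [smul_eq_mul] at this
  have heq : (2-s) * 1 + (s-1) * 2 = s := by ring
  rw [heq, Df_one hx, Df_two hx] at this
  linarith

lemma Df_nonneg (hx : 1 < x) {s : ℝ} (h2 : 2 ≤ s) :
    0 ≤ Df (1/(1+x)) x (Real.log x) s := by
  rcases eq_or_lt_of_le h2 with h|h
  · rw [← h, Df_two hx]
  · have hc := Df_convex hx (1/(1+x))
    have hmem : s ∈ Set.Ici (1:ℝ) := Set.mem_Ici.2 (by linarith)
    have hs1 : (0:ℝ) < s - 1 := by linarith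
    have := hc.2 (Set.mem_Ici.2 (le_refl 1)) hmem
      (show (0:ℝ) ≤ (s-2)/(s-1) from div_nonneg (by linarith) (by linarith))
      (show (0:ℝ) ≤ 1/(s-1) by positivity)
      (show (s-2)/(s-1) + 1/(s-1) = 1 by field_simp; ring)
    simp only [smul_eq_mul] at this
    have heq : (s-2)/(s-1) * 1 + 1/(s-1) * s = 2 := by field_simp; ring
    rw [heq, Df_one hx, Df_two hx] at this
    have hpos : (0:ℝ) < 1/(s-1) := by positivity
    nlinarith

lemma Gf_two (hx : 1 < x) : Gf (1/(1+x)) x (Real.log x) 2 = 0 := by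
  have hx0 : (0:ℝ) < x := lt_trans one_pos hx
  have h1 : Real.exp (Real.log x * 2) = x^2 := by
    rw [show Real.log x * 2 = (2:ℕ) * Real.log x by push_cast; ring,
      Real.exp_nat_mul, Real.exp_log hx0]
  have h3 : (0:ℝ) < 1 + x := by linarith
  unfold Gf
  rw [h1, show x^2 + x = x * (1+x) by ring, Real.log_mul hx0.ne' h3.ne']
  field_simp
  ring

lemma Gf_nonneg_ge_one (hx : 1 < x) {s : ℝ} (hs : 1 ≤ s) :
    0 ≤ Gf (1/(1+x)) x (Real.log x) s := by
  have hx0 : (0:ℝ) < x := lt_trans one_pos hx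
  set w := Real.log x with hwdef
  set p := 1/(1+x) with hpdef
  have hw : 0 < w := Real.log_pos hx
  have hGd : ∀ s, HasDerivAt (Gf p x w) (w * Df p x w s) s := Gf_hasDeriv hx0 p w
  have hderiv : deriv (Gf p x w) = fun s => w * Df p x w s :=
    funext fun s => (hGd s).deriv
  rcases le_total s 2 with h|h
  · -- antitone on [1,2], G s ≥ G 2 = 0
    have hanti : AntitoneOn (Gf p x w) (Set.Icc 1 2) := by
      apply antitoneOn_of_deriv_nonpos (convex_Icc 1 2)
      · exact fun u _ => (hGd u).continuousAt.continuousWithinAt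
      · exact fun u _ => (hGd u).differentiableAt.differentiableWithinAt
      · intro u hu
        rw [hderiv]
        rw [interior_Icc] at hu
        have := Df_nonpos hx (le_of_lt hu.1) (le_of_lt hu.2)
        exact mul_nonpos_of_nonneg_of_nonpos hw.le this
    have := hanti (Set.mem_Icc.2 ⟨hs, h⟩) (Set.mem_Icc.2 ⟨by norm_num, le_refl 2⟩) h
    rw [Gf_two hx] at this
    exact this
  · have hmono : MonotoneOn (Gf p x w) (Set.Ici 2) := by
      apply monotoneOn_of_deriv_nonneg (convex_Ici 2)
      · exact fun u _ => (hGd u).continuousAt.continuousWithinAt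
      · exact fun u _ => (hGd u).differentiableAt.differentiableWithinAt
      · intro u hu
        rw [hderiv]
        rw [interior_Ici] at hu
        exact mul_nonneg hw.le (Df_nonneg hx (le_of_lt hu))
    have := hmono (Set.mem_Ici.2 (le_refl 2)) (Set.mem_Ici.2 h) h
    rw [Gf_two hx] at this
    exact this

lemma Gf_symm (hx : 1 < x) (p s : ℝ) :
    Gf p x (Real.log x) (2 - s) = Gf p x (Real.log x) s := by
  have hx0 : (0:ℝ) < x := lt_trans one_pos hx
  set w := Real.log x with hwdef
  have hew : Real.exp w = x := Real.exp_log hx0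
  have he2 : Real.exp (w * (2 - s)) = x^2 * Real.exp (-(w*s)) := by
    rw [show w*(2-s) = (w+w) + -(w*s) by ring, Real.exp_add, Real.exp_add, hew]; ring
  have hkey : Real.exp (w * (2 - s)) + x = (x * Real.exp (-(w*s))) * (Real.exp (w*s) + x) := by
    rw [he2, Real.exp_neg]
    field_simp
    ring
  have hne1 : x * Real.exp (-(w*s)) ≠ 0 := by positivity
  have hne2 : Real.exp (w*s) + x ≠ 0 := (exp_add_pos hx0).ne'
  unfold Gf
  rw [hkey, Real.log_mul hne1 hne2, Real.log_mul hx0.ne' (Real.exp_ne_zero _),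
    Real.log_exp, ← hwdef]
  ring

lemma Gf_nonneg_all (hx : 1 < x) (s : ℝ) : 0 ≤ Gf (1/(1+x)) x (Real.log x) s := by
  rcases le_total 1 s with h|h
  · exact Gf_nonneg_ge_one hx h
  · rw [← Gf_symm hx]
    exact Gf_nonneg_ge_one hx (by linarith)

lemma core_ineq (p t : ℝ) (hp0 : 0 < p) (hp : p < 1/2) :
    p * Real.exp (-(1 - p) * Real.log (p/(1-p)) * t)
      + (1 - p) * Real.exp (p * Real.log (p/(1-p)) * t)
    ≤ Real.exp ((1/2) * (p - 1/2) * Real.log (p/(1-p)) * t ^ 2) := by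
  have h1p : 0 < 1 - p := by linarith
  set x := (1-p)/p with hxdef
  have hx : 1 < x := by
    rw [hxdef, lt_div_iff₀ hp0]; linarith
  have hx0 : (0:ℝ) < x := lt_trans one_pos hx
  have h1x : (0:ℝ) < 1 + x := by linarith
  have hpx : p = 1/(1+x) := by
    rw [hxdef]; field_simp; ring
  have h1mp : 1 - p = x/(1+x) := by
    rw [hpx]; field_simp; ring
  set w' := Real.log x with hw'def
  have hw : Real.log (p/(1-p)) = -w' := by
    rw [hw'def, hxdef, show p/(1-p) = ((1-p)/p)⁻¹ by rw [inv_div], Real.log_inv]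
  have hG := Gf_nonneg_all hx t
  rw [← hpx] at hG
  unfold Gf at hG
  rw [← hw'def] at hG
  have hratio : (0:ℝ) < (Real.exp (w'*t) + x)/(1+x) := div_pos (exp_add_pos hx0) h1x
  have hL : p * Real.exp (-(1 - p) * Real.log (p/(1-p)) * t)
      + (1 - p) * Real.exp (p * Real.log (p/(1-p)) * t)
      = Real.exp (-(p*w'*t)) * ((Real.exp (w'*t) + x)/(1+x)) := by
    rw [hw, show -(1-p) * -w' * t = w'*t + -(p*w'*t) by ring,
      show p * -w' * t = -(p*w'*t) by ring, Real.exp_add, hpx]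
    field_simp
    ring
  rw [hL, show (Real.exp (w'*t) + x)/(1+x)
      = Real.exp (Real.log ((Real.exp (w'*t) + x)/(1+x))) from (Real.exp_log hratio).symm,
    ← Real.exp_add, Real.log_div (exp_add_pos hx0).ne' h1x.ne']
  rw [Real.exp_le_exp, hw]
  nlinarith [hG]

lemma key_ineq (p : ℝ) (hp : p ∈ Set.Ioo (0:ℝ) 1) (hp' : p ≠ 1/2)
    (w : ℝ) (hw : w = Real.log (p / (1 - p))) (t : ℝ) :
    p * Real.exp (-(1 - p) * w * t) + (1 - p) * Real.exp (p * w * t)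
      ≤ Real.exp ((1/2) * (p - 1/2) * w * t ^ 2) := by
  obtain ⟨hp0, hp1⟩ := hp
  rcases lt_or_gt_of_ne hp' with h|h
  · rw [hw]; exact core_ineq p t hp0 h
  · have hh := core_ineq (1-p) t (by linarith) (by linarith)
    have hL : Real.log ((1-p)/(1-(1-p))) = -w := by
      rw [show (1:ℝ)-(1-p) = p by ring, hw,
        show (1-p)/p = (p/(1-p))⁻¹ by rw [inv_div], Real.log_inv]
    rw [hL] at hh
    rw [show -(1-(1-p))*(-w)*t = p*w*t by ring,
      show (1-p)*(-w)*t = -(1-p)*w*t by ring,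
      show (1/2)*((1-p)-1/2)*(-w)*t^2 = (1/2)*(p-1/2)*w*t^2 by ring] at hh
    linarith

open MeasureTheory ProbabilityTheory

/-- Per-expert moment generating function bound: for `p ∈ (0,1)`, `p ≠ 1/2`,
`w = log(p/(1−p))` and a `{0,1}`-valued random variable `ξ` with `P(ξ = 1) = p`,
setting `θ = ξ − p`, for every real `t`,
`E[e^{−twθ}] = p·e^{−(1−p)wt} + (1−p)·e^{pwt} ≤ exp((1/2)(p − 1/2)w t²)`. -/
theorem per_expert_mgf_bound
    {Ω : Type*} [MeasurableSpace Ω] (μ : Measure Ω) [IsProbabilityMeasure μ]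
    (p : ℝ) (hp : p ∈ Set.Ioo (0 : ℝ) 1) (hp' : p ≠ 1/2)
    (w : ℝ) (hw : w = Real.log (p / (1 - p)))
    (ξ : Ω → ℝ) (hξmeas : Measurable ξ)
    (hξval : ∀ ω, ξ ω = 0 ∨ ξ ω = 1)
    (hξprob : μ {ω | ξ ω = 1} = ENNReal.ofReal p)
    (t : ℝ) :
    (∫ ω, Real.exp (-t * w * (ξ ω - p)) ∂μ =
        p * Real.exp (-(1 - p) * w * t) + (1 - p) * Real.exp (p * w * t)) ∧
    ∫ ω, Real.exp (-t * w * (ξ ω - p)) ∂μ ≤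
        Real.exp ((1/2) * (p - 1/2) * w * t ^ 2) := by
  set A := Real.exp (-(1 - p) * w * t) with hA
  set B := Real.exp (p * w * t) with hB
  have hmeas : MeasurableSet {ω | ξ ω = 1} := by
    have : {ω | ξ ω = 1} = ξ ⁻¹' {1} := by ext ω; simp
    rw [this]
    exact hξmeas (measurableSet_singleton 1)
  have hfun : (fun ω => Real.exp (-t * w * (ξ ω - p)))
      = fun ω => B + Set.indicator {ω | ξ ω = 1} (fun _ => A - B) ω := by
    funext ω
    rcases hξval ω with h|h
    · rw [Set.indicator_of_notMem (by simp [h])]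
      rw [h, hB, show -t * w * ((0:ℝ) - p) = p * w * t by ring]
      ring
    · rw [Set.indicator_of_mem (by simp [h])]
      rw [h, hA, show -t * w * ((1:ℝ) - p) = -(1-p) * w * t by ring]
      ring
  have hint : ∫ ω, Real.exp (-t * w * (ξ ω - p)) ∂μ = p * A + (1 - p) * B := by
    rw [hfun, integral_add (integrable_const B)
      ((integrable_const (A - B)).indicator hmeas),
      integral_const, integral_indicator_const _ hmeas, measureReal_def, measureReal_def, hξprob,
      ENNReal.toReal_ofReal hp.1.le]
    simp [measure_univ, smul_eq_mul]
    ring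
  exact ⟨hint, by rw [hint]; exact key_ineq p hp hp' w hw t⟩
end Core
end

section
/- Low-confidence error bound: in the committee model with estimation, define the low-confidence weights ŵ_i = p̂_i − 1/2 and let the low-confidence rule err exactly on the event {Σ_{i=1}^n ŵ_i (ξ_i − 1/2) ≤ 0}, where ξ_i = (η_i + 1)/2 ∈ {0,1} is the correctness indicator of expert i. Then the probability of error satisfies P(Σ_{i=1}^n ŵ_i(ξ_i − 1/2) ≤ 0) ≤ exp( −(8/n)·(Σ_{i=1}^n (p_i − 1/2)²)² ). -/
open MeasureTheory ProbabilityTheory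

section Helpers
open Real


/-- Two-point Hoeffding-type inequality on a symmetric interval. -/
lemma key_hoeffding (a : ℝ) (ha : |a| ≤ 1) (u : ℝ) :
    (1 - a) * exp (-u) + (1 + a) * exp u ≤ 2 * exp (a * u + u ^ 2 / 2) := by
  have ha1 : -1 ≤ a := neg_le_of_abs_le ha
  have ha2 : a ≤ 1 := le_of_abs_le ha
  set D : ℝ → ℝ := fun u => (1 - a) * exp (-u) + (1 + a) * exp u with hD
  set D' : ℝ → ℝ := fun u => (1 + a) * exp u - (1 - a) * exp (-u) with hD'
  have hDpos : ∀ u, 0 < D u := by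
    intro u
    have h1 : 0 ≤ (1 - a) * exp (-u) := mul_nonneg (by linarith) (exp_pos _).le
    have h2 : 0 ≤ (1 + a) * exp u := mul_nonneg (by linarith) (exp_pos _).le
    rcases lt_or_eq_of_le ha2 with h | h
    · have h3 : 0 < (1 - a) * exp (-u) := mul_pos (by linarith) (exp_pos _)
      simp only [hD]; linarith
    · have h3 : 0 < (1 + a) * exp u := mul_pos (by linarith) (exp_pos _)
      simp only [hD]; linarith
  have hDderiv : ∀ u, HasDerivAt D (D' u) u := by
    intro u
    have h1 : HasDerivAt (fun u : ℝ => exp (-u)) (-exp (-u)) u := by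
      simpa [Function.comp_def] using (Real.hasDerivAt_exp (-u)).comp u (hasDerivAt_neg u)
    have h2 := (h1.const_mul (1 - a)).add ((Real.hasDerivAt_exp u).const_mul (1 + a))
    exact h2.congr_deriv (by simp only [hD']; ring)
  have hD'deriv : ∀ u, HasDerivAt D' (D u) u := by
    intro u
    have h1 : HasDerivAt (fun u : ℝ => exp (-u)) (-exp (-u)) u := by
      simpa [Function.comp_def] using (Real.hasDerivAt_exp (-u)).comp u (hasDerivAt_neg u)
    have h2 := ((Real.hasDerivAt_exp u).const_mul (1 + a)).sub (h1.const_mul (1 - a))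
    exact h2.congr_deriv (by simp only [hD]; ring)
  -- g = f' where f u = log (D u) - a*u - u^2/2
  set g : ℝ → ℝ := fun u => D' u / D u - a - u with hg
  have hgderiv : ∀ u, HasDerivAt g ((D u * D u - D' u * D' u) / (D u) ^ 2 - (a + u) * 0 - 1) u := by
    intro u
    have h1 : HasDerivAt (fun u => D' u / D u) ((D u * D u - D' u * D' u) / (D u) ^ 2) u :=
      (hD'deriv u).div (hDderiv u) (hDpos u).ne'
    have := (h1.sub (hasDerivAt_const u a)).sub (hasDerivAt_id u)
    exact this.congr_deriv (by ring)
  have hgnonpos : ∀ u, (D u * D u - D' u * D' u) / (D u) ^ 2 - (a + u) * 0 - 1 ≤ 0 := by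
    intro u
    have h := hDpos u
    have : (D u * D u - D' u * D' u) / (D u) ^ 2 - 1 = -(D' u) ^ 2 / (D u) ^ 2 := by
      field_simp
      ring
    rw [mul_zero, sub_zero, this]
    exact div_nonpos_of_nonpos_of_nonneg (neg_nonpos.mpr (sq_nonneg _)) (sq_nonneg _)
  have hganti : Antitone g := antitone_of_hasDerivAt_nonpos hgderiv (fun u => hgnonpos u)
  have hg0 : g 0 = 0 := by
    simp only [hg, hD, hD']
    rw [neg_zero]
    field_simp
    ring
  set f : ℝ → ℝ := fun u => log (D u) - a * u - u ^ 2 / 2 with hf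
  have hfderiv : ∀ u, HasDerivAt f (g u) u := by
    intro u
    have h1 : HasDerivAt (fun u => log (D u)) (D' u / D u) u := by
      simpa using (hDderiv u).log (hDpos u).ne'
    have h2 : HasDerivAt (fun x : ℝ => a * x) a u := by
      simpa using (hasDerivAt_id u).const_mul a
    have h3 : HasDerivAt (fun x : ℝ => x ^ 2 / 2) u u := by
      have h := (hasDerivAt_pow 2 u).div_const 2
      norm_num at h
      exact h
    exact (h1.sub h2).sub h3
  have hfle : ∀ u, f u ≤ f 0 := by
    intro u
    rcases le_or_gt 0 u with h | h
    · have : AntitoneOn f (Set.Ici 0) := by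
        apply antitoneOn_of_hasDerivWithinAt_nonpos (convex_Ici 0)
          (fun x _ => (hfderiv x).continuousAt.continuousWithinAt)
          (fun x hx => (hfderiv x).hasDerivWithinAt)
        intro x hx
        rw [interior_Ici] at hx
        calc g x ≤ g 0 := hganti (le_of_lt hx)
        _ = 0 := hg0
      exact this Set.self_mem_Ici h h
    · have : MonotoneOn f (Set.Iic 0) := by
        apply monotoneOn_of_hasDerivWithinAt_nonneg (convex_Iic 0)
          (fun x _ => (hfderiv x).continuousAt.continuousWithinAt)
          (fun x hx => (hfderiv x).hasDerivWithinAt)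
        intro x hx
        rw [interior_Iic] at hx
        have : g 0 ≤ g x := hganti (le_of_lt hx)
        rw [hg0] at this
        exact this
      exact this (le_of_lt h) Set.self_mem_Iic (le_of_lt h)
  have hf0 : f 0 = log 2 := by
    simp only [hf, hD]
    norm_num
  have := hfle u
  rw [hf0] at this
  have hlog : log (D u) ≤ log 2 + (a * u + u ^ 2 / 2) := by
    simp only [hf] at this
    linarith
  calc D u = exp (log (D u)) := (exp_log (hDpos u)).symm
  _ ≤ exp (log 2 + (a * u + u ^ 2 / 2)) := exp_le_exp.mpr hlog
  _ = 2 * exp (a * u + u ^ 2 / 2) := by rw [exp_add, exp_log]; norm_num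


lemma binom_sum_one (m : ℕ) (x y : ℝ) :
    ∑ j ∈ Finset.range (m + 1), (m.choose j : ℝ) * x ^ j * y ^ (m - j) = (x + y) ^ m := by
  rw [add_pow]
  exact Finset.sum_congr rfl fun j _ => by ring

lemma binom_mean (m : ℕ) (hm : 1 ≤ m) (x y : ℝ) :
    ∑ j ∈ Finset.range (m + 1), (j : ℝ) * ((m.choose j : ℝ) * x ^ j * y ^ (m - j)) =
      m * x * (x + y) ^ (m - 1) := by
  obtain ⟨m', rfl⟩ : ∃ m', m = m' + 1 := ⟨m - 1, by omega⟩
  rw [Finset.sum_range_succ']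
  simp only [Nat.cast_zero, zero_mul, add_zero]
  have key : ∀ i : ℕ, ((i+1 : ℕ) : ℝ) * (((m' + 1).choose (i+1) : ℝ) * x ^ (i+1) * y ^ (m' + 1 - (i+1)))
      = ((m' + 1 : ℕ) : ℝ) * x * ((m'.choose i : ℝ) * x ^ i * y ^ (m' - i)) := by
    intro i
    have h : (m' + 1) * m'.choose i = (m' + 1).choose (i + 1) * (i + 1) :=
      Nat.add_one_mul_choose_eq m' i
    have hcast : ((m' + 1 : ℕ) : ℝ) * (m'.choose i : ℝ) = ((m' + 1).choose (i+1) : ℝ) * ((i+1 : ℕ) : ℝ) := by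
      exact_mod_cast congrArg (Nat.cast : ℕ → ℝ) h
    have hsub : m' + 1 - (i + 1) = m' - i := by omega
    rw [hsub]
    push_cast at hcast ⊢
    linear_combination (x ^ (i+1) * y ^ (m' - i)) * hcast.symm
  calc ∑ i ∈ Finset.range (m' + 1), ((i+1 : ℕ) : ℝ) * (((m' + 1).choose (i+1) : ℝ) * x ^ (i+1) * y ^ (m' + 1 - (i+1)))
      = ∑ i ∈ Finset.range (m' + 1), ((m' + 1 : ℕ) : ℝ) * x * ((m'.choose i : ℝ) * x ^ i * y ^ (m' - i)) :=
        Finset.sum_congr rfl fun i _ => key i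
    _ = ((m' + 1 : ℕ) : ℝ) * x * ∑ i ∈ Finset.range (m' + 1), ((m'.choose i : ℝ) * x ^ i * y ^ (m' - i)) := by
        rw [Finset.mul_sum]
    _ = ((m' + 1 : ℕ) : ℝ) * x * (x + y) ^ (m' + 1 - 1) := by
        rw [binom_sum_one]
        norm_num

/-- Hoeffding-type mgf bound for an a.e.-bounded random variable on a symmetric interval. -/
lemma mgf_bound {Ω : Type*} [MeasurableSpace Ω] (μ : Measure Ω) [IsProbabilityMeasure μ]
    (X : Ω → ℝ) (hX : Measurable X) (c : ℝ) (hc : 0 < c) (hb : ∀ᵐ ω ∂μ, |X ω| ≤ c) (t : ℝ) :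
    ∫ ω, exp (t * X ω) ∂μ ≤ exp (t * (∫ ω, X ω ∂μ) + t ^ 2 * c ^ 2 / 2) := by
  have hXint : Integrable X μ := by
    refine (integrable_const c).mono' hX.aestronglyMeasurable ?_
    filter_upwards [hb] with ω hω using by simpa using hω
  set M : ℝ := ∫ ω, X ω ∂μ with hM
  have hMc : |M| ≤ c := by
    calc |M| ≤ ∫ ω, |X ω| ∂μ := by
          simpa [Real.norm_eq_abs] using norm_integral_le_integral_norm (μ := μ) X
    _ ≤ ∫ _, c ∂μ := integral_mono_ae hXint.abs (integrable_const c) hb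
    _ = c := by simp
  -- pointwise convexity bound
  have hpt : ∀ᵐ ω ∂μ, exp (t * X ω) ≤
      (exp (-(t*c)) + exp (t*c)) / 2 + X ω * ((exp (t*c) - exp (-(t*c))) / (2*c)) := by
    filter_upwards [hb] with ω hω
    set x := X ω
    have hθ0 : 0 ≤ (c - x) / (2*c) := by
      apply div_nonneg _ (by linarith)
      have := neg_le_of_abs_le hω; have := le_of_abs_le hω; linarith
    have hθ1 : 0 ≤ (c + x) / (2*c) := by
      apply div_nonneg _ (by linarith)
      have := neg_le_of_abs_le hω; linarith
    have hsum : (c - x) / (2*c) + (c + x) / (2*c) = 1 := by field_simp; ring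
    have hconv := convexOn_exp.2 (Set.mem_univ (-(t*c))) (Set.mem_univ (t*c)) hθ0 hθ1 hsum
    have harg : ((c - x) / (2*c)) • (-(t*c)) + ((c + x) / (2*c)) • (t*c) = t * x := by
      simp only [smul_eq_mul]
      rw [div_mul_eq_mul_div, div_mul_eq_mul_div, ← add_div,
        div_eq_iff (by positivity : (2*c) ≠ 0)]
      ring
    rw [harg] at hconv
    calc exp (t * x) ≤ (c - x) / (2*c) * exp (-(t*c)) + (c + x) / (2*c) * exp (t*c) := by
          simpa [smul_eq_mul] using hconv
    _ = (exp (-(t*c)) + exp (t*c)) / 2 + x * ((exp (t*c) - exp (-(t*c))) / (2*c)) := by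
          field_simp; ring
  have hexpint : Integrable (fun ω => exp (t * X ω)) μ := by
    refine (integrable_const (exp (|t| * c))).mono'
      ((hX.const_mul t).exp).aestronglyMeasurable ?_
    filter_upwards [hb] with ω hω
    rw [Real.norm_eq_abs, abs_of_pos (exp_pos _), exp_le_exp]
    calc t * X ω ≤ |t * X ω| := le_abs_self _
    _ = |t| * |X ω| := abs_mul _ _
    _ ≤ |t| * c := by apply mul_le_mul_of_nonneg_left hω (abs_nonneg t)
  have hrhsint : Integrable (fun ω => (exp (-(t*c)) + exp (t*c)) / 2 +
      X ω * ((exp (t*c) - exp (-(t*c))) / (2*c))) μ :=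
    (integrable_const _).add (hXint.mul_const _)
  calc ∫ ω, exp (t * X ω) ∂μ
      ≤ ∫ ω, ((exp (-(t*c)) + exp (t*c)) / 2 +
        X ω * ((exp (t*c) - exp (-(t*c))) / (2*c))) ∂μ := integral_mono_ae hexpint hrhsint hpt
    _ = (exp (-(t*c)) + exp (t*c)) / 2 + M * ((exp (t*c) - exp (-(t*c))) / (2*c)) := by
        rw [integral_add (integrable_const _) (hXint.mul_const _), integral_const,
          integral_mul_const]
        simp [hM]
    _ = ((1 - M/c) * exp (-(t*c)) + (1 + M/c) * exp (t*c)) / 2 := by field_simp; ring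
    _ ≤ (2 * exp ((M/c) * (t*c) + (t*c) ^ 2 / 2)) / 2 := by
        have ha : |M/c| ≤ 1 := by
          rw [abs_div, abs_of_pos hc, div_le_one hc]; exact hMc
        have := key_hoeffding (M/c) ha (t*c)
        linarith
    _ = exp (t * M + t ^ 2 * c ^ 2 / 2) := by
        rw [mul_div_cancel_left₀]
        congr 1
        · field_simp
        · norm_num

lemma binom_facts {Ω : Type*} [MeasurableSpace Ω] (μ : Measure Ω) [IsProbabilityMeasure μ]
    (m : ℕ) (hm : 1 ≤ m) (p : ℝ) (hp0 : 0 ≤ p) (hp1 : p ≤ 1)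
    (k : Ω → ℕ) (hk : Measurable k)
    (hb : ∀ j, j ≤ m → μ {ω | k ω = j} =
      ENNReal.ofReal ((m.choose j : ℝ) * p ^ j * (1 - p) ^ (m - j))) :
    (∀ᵐ ω ∂μ, k ω ≤ m) ∧ ∫ ω, (k ω : ℝ) ∂μ = m * p := by
  have hnn : ∀ j, 0 ≤ (m.choose j : ℝ) * p ^ j * (1 - p) ^ (m - j) := fun j =>
    mul_nonneg (mul_nonneg (Nat.cast_nonneg _) (pow_nonneg hp0 _))
      (pow_nonneg (by linarith) _)
  have hmeasj : ∀ j : ℕ, MeasurableSet {ω | k ω = j} := fun j =>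
    hk (measurableSet_singleton j)
  have hdisj : (↑(Finset.range (m + 1)) : Set ℕ).PairwiseDisjoint
      (fun j => {ω | k ω = j}) := by
    intro i _ j _ hij
    rw [Function.onFun, Set.disjoint_left]
    intro ω hi hj
    exact hij (hi.symm.trans hj)
  have hUnion : μ (⋃ j ∈ Finset.range (m + 1), {ω | k ω = j}) = 1 := by
    rw [measure_biUnion_finset hdisj (fun j _ => hmeasj j)]
    rw [Finset.sum_congr rfl (fun j hj => hb j (by
      have := Finset.mem_range.mp hj; omega))]
    rw [← ENNReal.ofReal_sum_of_nonneg (fun j _ => hnn j), binom_sum_one]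
    norm_num
  have hae : ∀ᵐ ω ∂μ, k ω ≤ m := by
    have hc : μ ((⋃ j ∈ Finset.range (m + 1), {ω | k ω = j})ᶜ) = 0 := by
      rw [measure_compl (Finset.measurableSet_biUnion _ (fun j _ => hmeasj j))
        (measure_ne_top _ _), hUnion, measure_univ, tsub_self]
    rw [ae_iff]
    refine measure_mono_null ?_ hc
    intro ω hω
    simp only [Set.mem_setOf_eq, not_le] at hω
    simp only [Set.mem_compl_iff, Set.mem_iUnion, Finset.mem_range, Set.mem_setOf_eq,
      not_exists]
    intro j hj hkj
    omega
  refine ⟨hae, ?_⟩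
  have hcongr : (fun ω => (k ω : ℝ)) =ᵐ[μ]
      (fun ω => ∑ j ∈ Finset.range (m + 1),
        Set.indicator {ω' | k ω' = j} (fun _ => (j : ℝ)) ω) := by
    filter_upwards [hae] with ω hω
    rw [Finset.sum_eq_single_of_mem (k ω) (Finset.mem_range.mpr (by omega))]
    · rw [Set.indicator_of_mem (by exact rfl : ω ∈ {ω' | k ω' = k ω})]
    · intro j _ hj
      exact Set.indicator_of_notMem (fun h => hj (Set.mem_setOf_eq ▸ h).symm) _
  rw [integral_congr_ae hcongr,
    integral_finset_sum _ (fun j _ => (integrable_const _).indicator (hmeasj j))]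
  have heach : ∀ j ∈ Finset.range (m + 1),
      ∫ ω, Set.indicator {ω' | k ω' = j} (fun _ => (j : ℝ)) ω ∂μ =
        (j : ℝ) * ((m.choose j : ℝ) * p ^ j * (1 - p) ^ (m - j)) := by
    intro j hj
    rw [integral_indicator_const _ (hmeasj j), measureReal_def, hb j (by
      have := Finset.mem_range.mp hj; omega), ENNReal.toReal_ofReal (hnn j), smul_eq_mul]
    ring
  rw [Finset.sum_congr rfl heach, binom_mean m hm p (1 - p)]
  norm_num

end Helpers

/-- Low-confidence error bound: with empirical competences `p̂ i = k i / m i`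
(`k i ~ Binomial(m i, p i)`, mutually independent and independent of the correctness
indicators), the low-confidence rule with weights `ŵ i = p̂ i − 1/2` errs with
probability at most `exp(−(8/n)(∑ (p i − 1/2)²)²)`.  Here `ξ i = (η i + 1)/2` is the
`{0,1}`-valued correctness indicator.  Independence is expressed by: the pairs
`(η i, k i)` are mutually independent across `i`, and within each pair `η i` and `k i`
are independent. -/
theorem low_confidence_error_bound
    {Ω : Type*} [MeasurableSpace Ω] (μ : Measure Ω) [IsProbabilityMeasure μ]
    (n : ℕ) (hn : 1 ≤ n)
    (p : Fin n → ℝ) (hp : ∀ i, p i ∈ Set.Ioo (0 : ℝ) 1)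
    (η : Fin n → Ω → ℝ)
    (hηmeas : ∀ i, Measurable (η i))
    (hηval : ∀ i ω, η i ω = 1 ∨ η i ω = -1)
    (hηprob : ∀ i, μ {ω | η i ω = 1} = ENNReal.ofReal (p i))
    (m : Fin n → ℕ) (hm : ∀ i, 1 ≤ m i)
    (k : Fin n → Ω → ℕ) (hkmeas : ∀ i, Measurable (k i))
    (hbinom : ∀ i j, j ≤ m i → μ {ω | k i ω = j} =
        ENNReal.ofReal ((m i).choose j * p i ^ j * (1 - p i) ^ (m i - j)))
    (hind : iIndepFun (fun i ω => (η i ω, k i ω)) μ)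
    (hindin : ∀ i, IndepFun (η i) (k i) μ) :
    μ {ω | ∑ i, ((k i ω : ℝ) / (m i : ℝ) - 1/2) * ((η i ω + 1) / 2 - 1/2) ≤ 0} ≤
      ENNReal.ofReal (Real.exp (-(8 / (n : ℝ)) * (∑ i, (p i - 1/2) ^ 2) ^ 2)) := by
  -- setup
  set X : Fin n → Ω → ℝ :=
    fun i ω => ((k i ω : ℝ) / (m i : ℝ) - 1/2) * ((η i ω + 1) / 2 - 1/2) with hX
  set S : ℝ := ∑ i, (p i - 1/2) ^ 2 with hSdef
  have hS0 : 0 ≤ S := Finset.sum_nonneg fun i _ => sq_nonneg _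
  have hnpos : (0 : ℝ) < n := by exact_mod_cast hn
  set t : ℝ := -16 * S / n with htdef
  have ht : t ≤ 0 := by
    rw [htdef]
    apply div_nonpos_of_nonpos_of_nonneg _ hnpos.le
    nlinarith
  have hcastm : ∀ i, (0 : ℝ) < (m i : ℝ) := fun i => by exact_mod_cast hm i
  have hnatcast : Measurable (fun j : ℕ => (j : ℝ)) := measurable_from_top
  have hXmeas : ∀ i, Measurable (X i) := by
    intro i
    exact (((hnatcast.comp (hkmeas i)).div_const _).sub_const _).mul
      ((((hηmeas i).add_const 1).div_const 2).sub_const _)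
  -- binomial facts
  have hbf : ∀ i, (∀ᵐ ω ∂μ, k i ω ≤ m i) ∧ ∫ ω, (k i ω : ℝ) ∂μ = m i * p i := fun i =>
    binom_facts μ (m i) (hm i) (p i) (hp i).1.le (hp i).2.le (k i) (hkmeas i)
      (fun j hj => hbinom i j hj)
  -- expectation of η
  have hEη : ∀ i, ∫ ω, η i ω ∂μ = 2 * p i - 1 := by
    intro i
    have hSmeas : MeasurableSet {ω | η i ω = 1} := (hηmeas i) (measurableSet_singleton 1)
    have hptw : (fun ω => η i ω) =
        fun ω => 2 * Set.indicator {ω' | η i ω' = 1} (fun _ => (1:ℝ)) ω - 1 := by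
      funext ω
      rcases hηval i ω with h | h
      · rw [Set.indicator_of_mem (by exact h : ω ∈ {ω' | η i ω' = 1})]
        rw [h]; norm_num
      · rw [Set.indicator_of_notMem (by
          intro hmem
          rw [Set.mem_setOf_eq] at hmem
          rw [hmem] at h
          norm_num at h)]
        rw [h]; norm_num
    rw [hptw, integral_sub (((integrable_const (1:ℝ)).indicator hSmeas).const_mul 2)
      (integrable_const 1), integral_const_mul, integral_indicator_const _ hSmeas,
      integral_const, measureReal_def, hηprob i, ENNReal.toReal_ofReal (hp i).1.le]
    simp
  -- expectation of X i
  have hEX : ∀ i, ∫ ω, X i ω ∂μ = (p i - 1/2) ^ 2 := by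
    intro i
    have hψ : Measurable (fun j : ℕ => (j : ℝ) / (m i : ℝ) - 1/2) :=
      (hnatcast.div_const _).sub_const _
    have hφ : Measurable (fun a : ℝ => (a + 1) / 2 - 1/2) :=
      ((measurable_id.add_const 1).div_const 2).sub_const _
    have hAB : IndepFun (fun ω => (k i ω : ℝ) / (m i : ℝ) - 1/2)
        (fun ω => (η i ω + 1) / 2 - 1/2) μ :=
      ((hindin i).symm.comp hψ hφ)
    have hmul := hAB.integral_fun_mul_eq_mul_integral
      ((((hnatcast.comp (hkmeas i)).div_const _).sub_const _).aestronglyMeasurable)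
      (((((hηmeas i).add_const 1).div_const 2).sub_const _).aestronglyMeasurable)
    rw [hX]
    rw [hmul]
    -- compute the two integrals
    have hkint : Integrable (fun ω => (k i ω : ℝ)) μ := by
      refine (integrable_const ((m i : ℝ))).mono'
        ((hnatcast.comp (hkmeas i)).aestronglyMeasurable) ?_
      filter_upwards [(hbf i).1] with ω hω
      rw [Real.norm_eq_abs, abs_of_nonneg (Nat.cast_nonneg _)]
      exact_mod_cast hω
    have hA : ∫ ω, ((k i ω : ℝ) / (m i : ℝ) - 1/2) ∂μ = p i - 1/2 := by
      rw [integral_sub (hkint.div_const _) (integrable_const _), integral_div,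
        (hbf i).2, integral_const]
      field_simp
      rw [probReal_univ, smul_eq_mul, mul_div_cancel_left₀ _ (hcastm i).ne']
      ring
    have hηint : Integrable (η i) μ := by
      refine (integrable_const (1:ℝ)).mono' (hηmeas i).aestronglyMeasurable ?_
      refine Filter.Eventually.of_forall fun ω => ?_
      rcases hηval i ω with h | h <;> rw [h] <;> norm_num
    have hB : ∫ ω, ((η i ω + 1) / 2 - 1/2) ∂μ = p i - 1/2 := by
      have : (fun ω => (η i ω + 1) / 2 - 1/2) = fun ω => η i ω / 2 := by
        funext ω; ring
      rw [this, integral_div, hEη i]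
      ring
    rw [hA, hB]
    ring
  -- a.e. bound on |X i|
  have habs : ∀ i, ∀ᵐ ω ∂μ, |X i ω| ≤ 1/4 := by
    intro i
    filter_upwards [(hbf i).1] with ω hω
    rw [hX, abs_mul]
    have h1 : |(k i ω : ℝ) / (m i : ℝ) - 1/2| ≤ 1/2 := by
      rw [abs_le]
      have hk0 : (0 : ℝ) ≤ (k i ω : ℝ) / (m i : ℝ) :=
        div_nonneg (Nat.cast_nonneg _) (hcastm i).le
      have hk1 : (k i ω : ℝ) / (m i : ℝ) ≤ 1 := by
        rw [div_le_one (hcastm i)]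
        exact_mod_cast hω
      constructor <;> linarith
    have h2 : |(η i ω + 1) / 2 - 1/2| ≤ 1/2 := by
      rcases hηval i ω with h | h <;> rw [h] <;> norm_num [abs_le]
    calc |(k i ω : ℝ) / (m i : ℝ) - 1/2| * |(η i ω + 1) / 2 - 1/2| ≤ (1/2) * (1/2) :=
          mul_le_mul h1 h2 (abs_nonneg _) (by norm_num)
      _ = 1/4 := by norm_num
  -- independence of the X i
  have hiX : iIndepFun X μ := by
    have := hind.comp
      (fun i (q : ℝ × ℕ) => ((q.2 : ℝ) / (m i : ℝ) - 1/2) * ((q.1 + 1) / 2 - 1/2))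
      (fun i => (((hnatcast.comp measurable_snd).div_const _).sub_const _).mul
        (((measurable_fst.add_const 1).div_const 2).sub_const _))
    exact this
  -- mgf product and bound
  have hmgf_prod : mgf (∑ i, X i) μ t = ∏ i, mgf (X i) μ t :=
    hiX.mgf_sum hXmeas Finset.univ
  have hmgf_le : ∀ i, mgf (X i) μ t ≤ Real.exp (t * (p i - 1/2) ^ 2 + t ^ 2 / 32) := by
    intro i
    have := mgf_bound μ (X i) (hXmeas i) (1/4) (by norm_num) (habs i) t
    rw [hEX i] at this
    calc mgf (X i) μ t = ∫ ω, Real.exp (t * X i ω) ∂μ := rfl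
      _ ≤ Real.exp (t * (p i - 1/2) ^ 2 + t ^ 2 * (1/4) ^ 2 / 2) := this
      _ = Real.exp (t * (p i - 1/2) ^ 2 + t ^ 2 / 32) := by
          rw [show t ^ 2 * (1/4:ℝ) ^ 2 / 2 = t ^ 2 / 32 by ring]
  -- integrability of exp (t * sum)
  have hsumabs : ∀ᵐ ω ∂μ, |(∑ i, X i) ω| ≤ n / 4 := by
    have hall : ∀ᵐ ω ∂μ, ∀ i, |X i ω| ≤ 1/4 := ae_all_iff.mpr habs
    filter_upwards [hall] with ω hω
    rw [Finset.sum_apply]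
    calc |∑ i, X i ω| ≤ ∑ i, |X i ω| := Finset.abs_sum_le_sum_abs _ _
      _ ≤ ∑ _i : Fin n, (1/4 : ℝ) := Finset.sum_le_sum fun i _ => hω i
      _ = n / 4 := by simp [Finset.sum_const]; ring
  have h_int_sum : Integrable (fun ω => Real.exp (t * (∑ i, X i) ω)) μ := by
    refine (integrable_const (Real.exp (|t| * (n / 4)))).mono' ?_ ?_
    · refine (Measurable.exp ?_).aestronglyMeasurable
      simp only [Finset.sum_apply]
      exact (Finset.measurable_sum _ fun i _ => hXmeas i).const_mul t
    · filter_upwards [hsumabs] with ω hω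
      rw [Real.norm_eq_abs, abs_of_pos (Real.exp_pos _), Real.exp_le_exp]
      calc t * (∑ i, X i) ω ≤ |t * (∑ i, X i) ω| := le_abs_self _
        _ = |t| * |(∑ i, X i) ω| := abs_mul _ _
        _ ≤ |t| * (n / 4) := mul_le_mul_of_nonneg_left hω (abs_nonneg t)
  -- Chernoff
  have chern := measure_le_le_exp_mul_mgf (μ := μ) (X := ∑ i, X i) 0 ht h_int_sum
  -- final numeric bound
  have hfinal : Real.exp (-t * 0) * mgf (∑ i, X i) μ t ≤
      Real.exp (-(8 / (n : ℝ)) * S ^ 2) := by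
    rw [mul_zero, Real.exp_zero, one_mul, hmgf_prod]
    calc ∏ i, mgf (X i) μ t ≤ ∏ i, Real.exp (t * (p i - 1/2) ^ 2 + t ^ 2 / 32) :=
          Finset.prod_le_prod (fun i _ => mgf_nonneg) (fun i _ => hmgf_le i)
      _ = Real.exp (∑ i, (t * (p i - 1/2) ^ 2 + t ^ 2 / 32)) := by
          rw [Real.exp_sum]
      _ = Real.exp (t * S + n * (t ^ 2 / 32)) := by
          congr 1
          rw [Finset.sum_add_distrib, ← Finset.mul_sum, Finset.sum_const, Finset.card_univ,
            Fintype.card_fin, nsmul_eq_mul, ← hSdef]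
      _ = Real.exp (-(8 / (n : ℝ)) * S ^ 2) := by
          have harith : ∀ s nn : ℝ, 0 < nn →
              (-16 * s / nn) * s + nn * ((-16 * s / nn) ^ 2 / 32) = -(8 / nn) * s ^ 2 := by
            intro s nn h
            have hne : nn ≠ 0 := h.ne'
            field_simp
            ring
          congr 1
          rw [htdef]
          exact harith S n hnpos
  -- wrap up
  have hseteq : {ω | ∑ i, ((k i ω : ℝ) / (m i : ℝ) - 1/2) * ((η i ω + 1) / 2 - 1/2) ≤ 0}
      = {ω | (∑ i, X i) ω ≤ 0} := by
    ext ω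
    simp only [Set.mem_setOf_eq, Finset.sum_apply, hX]
  rw [hseteq]
  calc μ {ω | (∑ i, X i) ω ≤ 0}
      = ENNReal.ofReal ((μ {ω | (∑ i, X i) ω ≤ 0}).toReal) :=
        (ENNReal.ofReal_toReal (measure_ne_top _ _)).symm
    _ ≤ ENNReal.ofReal (Real.exp (-(8 / (n : ℝ)) * S ^ 2)) :=
        ENNReal.ofReal_le_ofReal (le_trans chern hfinal)
end

section
/- Lemma 7 (perturbation of log-odds weights): let 0 < ε ≤ 5 and set ε̃ = (√(4ε+1) − 1)/4. Let p, p̂ ∈ (0,1), q = 1 − p, q̂ = 1 − p̂, w = log(p/q) and ŵ = log(p̂/q̂). If 1 − ε̃ ≤ p̂/p ≤ 1 + ε̃ and 1 − ε̃ ≤ q̂/q ≤ 1 + ε̃, then |w − ŵ| ≤ ε. -/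
private lemma poly_aux (x : ℝ) (h0 : 0 ≤ x) (h9 : x ≤ 9/10) :
    1 + x ≤ (1 - x) * (1 + x/2 + x^2)^4 := by
  nlinarith [mul_nonneg h0 h0, mul_nonneg (mul_nonneg h0 h0) h0,
    mul_nonneg (mul_nonneg (mul_nonneg h0 h0) h0) h0,
    sq_nonneg x, sq_nonneg (x*x), sq_nonneg (x*x*x),
    mul_nonneg (sub_nonneg.mpr h9) (mul_nonneg (mul_nonneg h0 h0) h0),
    mul_nonneg (sub_nonneg.mpr h9) (mul_nonneg (mul_nonneg (mul_nonneg h0 h0) h0) h0),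
    mul_nonneg (mul_nonneg (sub_nonneg.mpr h9) (sub_nonneg.mpr h9)) (mul_nonneg (mul_nonneg h0 h0) h0)]

/-- Lemma 7 (perturbation of log-odds weights): for `0 < ε ≤ 5` and
`ε̃ = (√(4ε+1) − 1)/4`, if `p̂/p` and `q̂/q` both lie in `[1 − ε̃, 1 + ε̃]`
then the log-odds weights satisfy `|w − ŵ| ≤ ε`. -/
theorem log_odds_perturbation
    (ε : ℝ) (hε0 : 0 < ε) (hε5 : ε ≤ 5)
    (ε' : ℝ) (hε' : ε' = (Real.sqrt (4 * ε + 1) - 1) / 4)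
    (p phat : ℝ) (hp : p ∈ Set.Ioo (0 : ℝ) 1) (hphat : phat ∈ Set.Ioo (0 : ℝ) 1)
    (q qhat : ℝ) (hq : q = 1 - p) (hqhat : qhat = 1 - phat)
    (w what : ℝ) (hw : w = Real.log (p / q)) (hwhat : what = Real.log (phat / qhat))
    (hplo : 1 - ε' ≤ phat / p) (hphi : phat / p ≤ 1 + ε')
    (hqlo : 1 - ε' ≤ qhat / q) (hqhi : qhat / q ≤ 1 + ε') :
    |w - what| ≤ ε := by
  obtain ⟨hp0, hp1⟩ := hp
  obtain ⟨hphat0, hphat1⟩ := hphat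
  have hq0 : 0 < q := by rw [hq]; linarith
  have hqhat0 : 0 < qhat := by rw [hqhat]; linarith
  -- basic facts about ε'
  have hsq : Real.sqrt (4 * ε + 1) ^ 2 = 4 * ε + 1 := Real.sq_sqrt (by linarith)
  have hs1 : (1:ℝ) ≤ Real.sqrt (4 * ε + 1) := by
    nlinarith [hsq, Real.sqrt_nonneg (4 * ε + 1)]
  have hshi : Real.sqrt (4 * ε + 1) ≤ 23 / 5 := by
    rw [show (23/5:ℝ) = Real.sqrt ((23/5)^2) from (Real.sqrt_sq (by norm_num)).symm]
    exact Real.sqrt_le_sqrt (by nlinarith)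
  have hε'0 : 0 ≤ ε' := by rw [hε']; linarith
  have hε'9 : ε' ≤ 9/10 := by rw [hε']; linarith
  have hkey : ε = 2 * ε' + 4 * ε' ^ 2 := by
    have : Real.sqrt (4 * ε + 1) = 4 * ε' + 1 := by rw [hε']; ring
    nlinarith [hsq, this]
  have h1mε' : (0:ℝ) < 1 - ε' := by linarith
  have h1pε' : (0:ℝ) < 1 + ε' := by linarith
  set a := phat / p with ha
  set b := qhat / q with hb
  have ha0 : 0 < a := div_pos hphat0 hp0
  have hb0 : 0 < b := div_pos hqhat0 hq0
  -- w - what = log b - log a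
  have hwdiff : w - what = Real.log b - Real.log a := by
    rw [hw, hwhat, ha, hb,
      Real.log_div (ne_of_gt hp0) (ne_of_gt hq0),
      Real.log_div (ne_of_gt hphat0) (ne_of_gt hqhat0),
      Real.log_div (ne_of_gt hphat0) (ne_of_gt hp0),
      Real.log_div (ne_of_gt hqhat0) (ne_of_gt hq0)]
    ring
  -- log bounds
  have hloga_lo : Real.log (1 - ε') ≤ Real.log a := Real.log_le_log h1mε' hplo
  have hloga_hi : Real.log a ≤ Real.log (1 + ε') := Real.log_le_log ha0 hphi
  have hlogb_lo : Real.log (1 - ε') ≤ Real.log b := Real.log_le_log h1mε' hqlo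
  have hlogb_hi : Real.log b ≤ Real.log (1 + ε') := Real.log_le_log hb0 hqhi
  -- key log estimate: log(1+ε') - log(1-ε') ≤ ε
  have hu0 : (0:ℝ) < 1 + ε'/2 + ε'^2 := by nlinarith
  have hpoly : 1 + ε' ≤ (1 - ε') * (1 + ε'/2 + ε'^2)^4 := poly_aux ε' hε'0 hε'9
  have hlog1 : Real.log (1 + ε') ≤ Real.log (1 - ε') + 4 * Real.log (1 + ε'/2 + ε'^2) := by
    have h2 : Real.log (1 + ε') ≤ Real.log ((1 - ε') * (1 + ε'/2 + ε'^2)^4) :=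
      Real.log_le_log h1pε' hpoly
    rwa [Real.log_mul (ne_of_gt h1mε') (ne_of_gt (pow_pos hu0 4)), Real.log_pow] at h2
  have hlog2 : Real.log (1 + ε'/2 + ε'^2) ≤ ε'/2 + ε'^2 := by
    have := Real.log_le_sub_one_of_pos hu0
    linarith
  have hfinal : Real.log (1 + ε') - Real.log (1 - ε') ≤ ε := by
    rw [hkey]; push_cast at hlog1 ⊢; linarith
  rw [abs_le]
  constructor <;> [linarith [hwdiff, hloga_hi, hlogb_lo, hfinal];
    linarith [hwdiff, hloga_lo, hlogb_hi, hfinal]]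
end
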